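/- arXiv:0812.1542 — 3 statements merged into one kernel-verified Lean document; each statement's English description precedes it below -/
import Mathlib

section
/- Let G be a connected graph with maximum degree Δ ≥ 3. Then the chromatic number of G^{2/5} (the square of the 5-subdivision of G) equals Δ + 1. -/
open SimpleGraph

/-- The `m`-th power of a graph `G`: two distinct vertices are adjacent iff
their distance in `G` is at most `m` (and they are connected). -/
def SimpleGraph.power {V : Type*} (G : SimpleGraph V) (m : ℕ) : SimpleGraph V where
  Adj x y := x ≠ y ∧ G.Reachable x y ∧ G.dist x y ≤ m
  symm := ⟨fun x y => by
    rintro ⟨h1, h2, h3⟩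
    exact ⟨h1.symm, h2.symm, by rwa [SimpleGraph.dist_comm]⟩⟩
  loopless := ⟨fun x => by simp⟩

/-- The `n`-subdivision of a graph `G`: every edge is replaced by a path of
length `n`.  Terminal vertices are `Sum.inl` vertices; each edge `e` carries
`n - 1` internal vertices `Sum.inr (e, i)`, `i : Fin (n-1)`, ordered along a
fixed orientation of `e`. -/
def SimpleGraph.subdivision {V : Type*} (G : SimpleGraph V) (n : ℕ) :
    SimpleGraph (V ⊕ (G.edgeSet × Fin (n - 1))) where
  Adj x y :=
    match x, y with
    | Sum.inl u, Sum.inl v => n = 1 ∧ G.Adj u v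
    | Sum.inl u, Sum.inr (e, i) =>
        (u = (Quot.out e.1).1 ∧ (i : ℕ) = 0) ∨
        (u = (Quot.out e.1).2 ∧ (i : ℕ) = n - 2)
    | Sum.inr (e, i), Sum.inl v =>
        (v = (Quot.out e.1).1 ∧ (i : ℕ) = 0) ∨
        (v = (Quot.out e.1).2 ∧ (i : ℕ) = n - 2)
    | Sum.inr (e, i), Sum.inr (f, j) =>
        e = f ∧ ((i : ℕ) + 1 = (j : ℕ) ∨ (j : ℕ) + 1 = (i : ℕ))
  symm := ⟨fun x y => by
    rcases x with u | ⟨e, i⟩ <;> rcases y with v | ⟨f, j⟩ <;>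
      simp only [] <;> intro h
    · exact ⟨h.1, h.2.symm⟩
    · exact h
    · exact h
    · obtain ⟨rfl, h2⟩ := h; exact ⟨rfl, h2.symm⟩⟩
  loopless := ⟨fun x => by
    rcases x with u | ⟨e, i⟩ <;> simp only []
    · rintro ⟨-, h⟩; exact G.loopless.irrefl u h
    · rintro ⟨-, h | h⟩ <;> omega⟩

open Finset in
lemma exists_notin_of_card_lt {n : ℕ} (s : Finset (Fin n)) (h : s.card < n) : ∃ x, x ∉ s := by
  by_contra h'
  push_neg at h'
  have hsub : (univ : Finset (Fin n)) ⊆ s := fun x _ => h' x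
  have := Finset.card_le_card hsub
  simp at this
  omega

lemma exists_greedy_coloring {V : Type*} [Fintype V] (G : SimpleGraph V) [DecidableRel G.Adj]
    (D : ℕ) (hD : ∀ v, G.degree v ≤ D) :
    ∃ t : V → Fin (D + 1), ∀ {u v}, G.Adj u v → t u ≠ t v := by
  classical
  set idx : V → ℕ := fun v => (Fintype.equivFin V v : ℕ) with hidx
  have idx_inj : Function.Injective idx := by
    intro a b h
    exact (Fintype.equivFin V).injective (Fin.ext h)
  set avoid : V → (V → Fin (D+1)) → Finset (Fin (D+1)) :=
    fun v c => ((G.neighborFinset v).filter (fun w => idx w < idx v)).image c with havoid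
  have avoid_lt : ∀ v c, (avoid v c).card < D + 1 := by
    intro v c
    calc (avoid v c).card ≤ ((G.neighborFinset v).filter (fun w => idx w < idx v)).card :=
          Finset.card_image_le
      _ ≤ (G.neighborFinset v).card := Finset.card_filter_le _ _
      _ ≤ D := by rw [card_neighborFinset_eq_degree]; exact hD v
      _ < D + 1 := Nat.lt_succ_self D
  set fresh : V → (V → Fin (D+1)) → Fin (D+1) :=
    fun v c => (exists_notin_of_card_lt _ (avoid_lt v c)).choose with hfresh
  have fresh_spec : ∀ v c, fresh v c ∉ avoid v c :=
    fun v c => (exists_notin_of_card_lt _ (avoid_lt v c)).choose_spec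
  set cols : ℕ → V → Fin (D+1) := fun k => Nat.rec (fun _ => 0)
    (fun k ck => fun v => if idx v = k then fresh v ck else ck v) k with hcols
  have cols_succ : ∀ k v, cols (k+1) v = if idx v = k then fresh v (cols k) else cols k v :=
    fun k v => rfl
  set t : V → Fin (D+1) := fun v => fresh v (cols (idx v)) with ht
  have stable : ∀ k v, idx v < k → cols k v = t v := by
    intro k
    induction k with
    | zero => intro v h; omega
    | succ k ih =>
      intro v h
      rw [cols_succ]
      by_cases hv : idx v = k
      · rw [if_pos hv, ht]; subst hv; rfl
      · rw [if_neg hv]; exact ih v (by omega)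
  refine ⟨t, ?_⟩
  have key : ∀ u v, G.Adj u v → idx u < idx v → t u ≠ t v := by
    intro u v hadj hlt heq
    have h1 : t u ∈ avoid v (cols (idx v)) := by
      rw [havoid]
      refine Finset.mem_image.2 ⟨u, ?_, ?_⟩
      · exact Finset.mem_filter.2 ⟨(mem_neighborFinset _ _ _).2 hadj.symm, hlt⟩
      · exact stable (idx v) u hlt
    rw [heq] at h1
    exact fresh_spec v (cols (idx v)) h1
  intro u v hadj
  rcases lt_trichotomy (idx u) (idx v) with h | h | h
  · exact key u v hadj h
  · exact absurd (idx_inj h) hadj.ne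
  · exact fun he => key v u hadj.symm h he.symm

lemma exists_good_coloring {V : Type*} [Fintype V] (G : SimpleGraph V) [DecidableRel G.Adj]
    (hΔ : 3 ≤ G.maxDegree) :
    ∃ Col : (V ⊕ (G.edgeSet × Fin (5 - 1))) → Fin (G.maxDegree + 1),
      ∀ x y, ((G.subdivision 5).power 2).Adj x y → Col x ≠ Col y := by
  classical
  set Δ := G.maxDegree with hΔdef
  obtain ⟨t, tprop⟩ := exists_greedy_coloring G Δ (fun v => G.degree_le_maxDegree v)
  -- endpoints of edges
  set A : G.edgeSet → V := fun e => (Quot.out (e : Sym2 V)).1 with hA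
  set B : G.edgeSet → V := fun e => (Quot.out (e : Sym2 V)).2 with hB
  have eAB : ∀ e : G.edgeSet, (e : Sym2 V) = s(A e, B e) := fun e => (Quot.out_eq _).symm
  have hAB : ∀ e : G.edgeSet, G.Adj (A e) (B e) := by
    intro e
    have h2 := e.2
    rw [eAB e] at h2
    exact h2
  have AneB : ∀ e, A e ≠ B e := fun e => (hAB e).ne
  have einj : ∀ e f : G.edgeSet, A e = A f → B e = B f → e = f := by
    intro e f h1 h2
    exact Subtype.ext (by rw [eAB e, eAB f, h1, h2])
  -- near color functions
  have embex : ∀ v : V, Nonempty ({w // G.Adj v w} ↪ {c : Fin (Δ + 1) // c ≠ t v}) := by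
    intro v
    apply Function.Embedding.nonempty_of_card_le
    have h1 : Fintype.card {w // G.Adj v w} = G.degree v := by
      rw [← card_neighborSet_eq_degree]
      rfl
    have h2 : Fintype.card {c : Fin (Δ + 1) // c ≠ t v} = Δ := by
      rw [Fintype.card_subtype_compl, Fintype.card_subtype_eq, Fintype.card_fin]
      omega
    rw [h1, h2]
    exact G.degree_le_maxDegree v
  set F : ∀ v : V, {w // G.Adj v w} → Fin (Δ + 1) :=
    fun v w => ((embex v).some w : Fin (Δ + 1)) with hF
  have Fne : ∀ (v : V) (w : {w // G.Adj v w}), F v w ≠ t v := fun v w => ((embex v).some w).2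
  have Fcongr : ∀ (v v' : V) (_ : v = v') (w w' : V) (h : G.Adj v w) (h' : G.Adj v' w'),
      F v ⟨w, h⟩ = F v' ⟨w', h'⟩ → w = w' := by
    rintro v v' rfl w w' h h' heq
    simp only [hF] at heq
    have := (embex v).some.injective (Subtype.ext heq)
    exact congrArg Subtype.val this
  set c1 : G.edgeSet → Fin (Δ + 1) := fun e => F (A e) ⟨B e, hAB e⟩ with hc1
  set c4 : G.edgeSet → Fin (Δ + 1) := fun e => F (B e) ⟨A e, (hAB e).symm⟩ with hc4
  have c1t : ∀ e, c1 e ≠ t (A e) := fun e => Fne (A e) _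
  have c4t : ∀ e, c4 e ≠ t (B e) := fun e => Fne (B e) _
  -- picking helper
  have pick3 : ∀ x y z : Fin (Δ + 1), ∃ c, c ≠ x ∧ c ≠ y ∧ c ≠ z := by
    intro x y z
    have hcard : ({x, y, z} : Finset (Fin (Δ + 1))).card < Δ + 1 := by
      have h3 : ({x, y, z} : Finset (Fin (Δ + 1))).card ≤ 3 := by
        apply le_trans (Finset.card_insert_le _ _)
        have := Finset.card_insert_le y ({z} : Finset (Fin (Δ + 1)))
        simp only [Finset.card_singleton] at this ⊢
        omega
      omega
    obtain ⟨c, hc⟩ := exists_notin_of_card_lt _ hcard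
    simp only [Finset.mem_insert, Finset.mem_singleton, not_or] at hc
    exact ⟨c, hc.1, hc.2.1, hc.2.2⟩
  -- second vertex color
  have ex2 : ∀ e : G.edgeSet, ∃ c, c ≠ t (A e) ∧ c ≠ c1 e ∧ c ≠ c4 e :=
    fun e => pick3 _ _ _
  set a2 : G.edgeSet → Fin (Δ + 1) := fun e =>
    if t (B e) ≠ t (A e) ∧ t (B e) ≠ c1 e ∧ t (B e) ≠ c4 e then t (B e) else (ex2 e).choose
    with ha2
  have a2p : ∀ e, a2 e ≠ t (A e) ∧ a2 e ≠ c1 e ∧ a2 e ≠ c4 e := by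
    intro e
    rw [ha2]
    simp only []
    split
    · assumption
    · exact (ex2 e).choose_spec
  -- third vertex color
  have ex3 : ∀ e : G.edgeSet, ∃ c, c ≠ t (B e) ∧ c ≠ c1 e ∧ c ≠ c4 e ∧ c ≠ a2 e := by
    intro e
    by_cases h : t (B e) ≠ t (A e) ∧ t (B e) ≠ c1 e ∧ t (B e) ≠ c4 e
    · have ha : a2 e = t (B e) := by rw [ha2]; simp only []; rw [if_pos h]
      obtain ⟨c, h1, h2, h3⟩ := pick3 (t (B e)) (c1 e) (c4 e)
      exact ⟨c, h1, h2, h3, by rw [ha]; exact h1⟩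
    · push_neg at h
      have htBA : t (B e) ≠ t (A e) := fun hh => tprop (hAB e) hh.symm
      obtain ⟨c, h1, h2, h3⟩ := pick3 (c1 e) (c4 e) (a2 e)
      refine ⟨c, ?_, h1, h2, h3⟩
      by_cases hc1 : t (B e) = c1 e
      · rw [hc1]; exact h1
      · rw [h htBA hc1]; exact h2
  set a3 : G.edgeSet → Fin (Δ + 1) := fun e => (ex3 e).choose with ha3
  have a3p : ∀ e, a3 e ≠ t (B e) ∧ a3 e ≠ c1 e ∧ a3 e ≠ c4 e ∧ a3 e ≠ a2 e :=
    fun e => (ex3 e).choose_spec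
  -- the coloring
  set Col : (V ⊕ (G.edgeSet × Fin (5 - 1))) → Fin (Δ + 1) := fun x =>
    match x with
    | Sum.inl v => t v
    | Sum.inr (e, i) =>
        if (i : ℕ) = 0 then c1 e else if (i : ℕ) = 1 then a2 e
        else if (i : ℕ) = 2 then a3 e else c4 e
    with hCol
  have ColL : ∀ v, Col (Sum.inl v) = t v := fun v => rfl
  have Col0 : ∀ e (i : Fin (5-1)), (i : ℕ) = 0 → Col (Sum.inr (e, i)) = c1 e := by
    intro e i hi; simp only [hCol]; simp [hi]
  have Col1 : ∀ e (i : Fin (5-1)), (i : ℕ) = 1 → Col (Sum.inr (e, i)) = a2 e := by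
    intro e i hi; simp only [hCol]; simp [hi]
  have Col2 : ∀ e (i : Fin (5-1)), (i : ℕ) = 2 → Col (Sum.inr (e, i)) = a3 e := by
    intro e i hi; simp only [hCol]; simp [hi]
  have Col3 : ∀ e (i : Fin (5-1)), (i : ℕ) = 3 → Col (Sum.inr (e, i)) = c4 e := by
    intro e i hi; simp only [hCol]; simp [hi]
  -- distinctness along adjacency
  have L1 : ∀ x y, (G.subdivision 5).Adj x y → Col x ≠ Col y := by
    intro x y hxy
    rcases x with xu | ⟨e, i⟩ <;> rcases y with yv | ⟨f, j⟩
    · exact absurd hxy.1 (by norm_num)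
    · rcases hxy with ⟨rfl, hj⟩ | ⟨rfl, hj⟩
      · rw [ColL, Col0 f j hj]
        exact fun h => c1t f h.symm
      · rw [ColL, Col3 f j (by omega)]
        exact fun h => c4t f h.symm
    · rcases hxy with ⟨rfl, hi⟩ | ⟨rfl, hi⟩
      · rw [ColL, Col0 e i hi]
        exact c1t e
      · rw [ColL, Col3 e i (by omega)]
        exact c4t e
    · obtain ⟨rfl, hij⟩ := hxy
      have hi4 := i.isLt
      have hj4 := j.isLt
      have hcases : ((i:ℕ)=0 ∧ (j:ℕ)=1) ∨ ((i:ℕ)=1 ∧ (j:ℕ)=2) ∨ ((i:ℕ)=2 ∧ (j:ℕ)=3) ∨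
          ((i:ℕ)=1 ∧ (j:ℕ)=0) ∨ ((i:ℕ)=2 ∧ (j:ℕ)=1) ∨ ((i:ℕ)=3 ∧ (j:ℕ)=2) := by omega
      rcases hcases with ⟨h1,h2⟩|⟨h1,h2⟩|⟨h1,h2⟩|⟨h1,h2⟩|⟨h1,h2⟩|⟨h1,h2⟩
      · rw [Col0 e i h1, Col1 e j h2]; exact fun h => (a2p e).2.1 h.symm
      · rw [Col1 e i h1, Col2 e j h2]; exact fun h => (a3p e).2.2.2 h.symm
      · rw [Col2 e i h1, Col3 e j h2]; exact (a3p e).2.2.1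
      · rw [Col1 e i h1, Col0 e j h2]; exact (a2p e).2.1
      · rw [Col2 e i h1, Col1 e j h2]; exact (a3p e).2.2.2
      · rw [Col3 e i h1, Col2 e j h2]; exact fun h => (a3p e).2.2.1 h.symm
  -- distinctness at distance two
  have L2 : ∀ x z y, (G.subdivision 5).Adj x z → (G.subdivision 5).Adj z y → x ≠ y →
      Col x ≠ Col y := by
    intro x z y hxz hzy hne
    rcases z with zv | ⟨g, k⟩
    · rcases x with xu | ⟨e, i⟩
      · exact absurd hxz.1 (by norm_num)
      rcases y with yv | ⟨f, j⟩
      · exact absurd hzy.1 (by norm_num)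
      rcases hxz with ⟨hv1, hi⟩ | ⟨hv1, hi⟩ <;> rcases hzy with ⟨hv2, hj⟩ | ⟨hv2, hj⟩ <;>
        subst hv1
      · -- i = 0, j = 0, A e = A f
        rw [Col0 e i hi, Col0 f j hj]
        intro h
        simp only [hc1] at h
        have hB' : B e = B f := Fcongr (A e) (A f) hv2 (B e) (B f) (hAB e) (hAB f) h
        have hef : e = f := einj e f hv2 hB'
        subst hef
        exact hne (by rw [show i = j from Fin.ext (by omega)])
      · -- i = 0, j = 3, A e = B f
        rw [Col0 e i hi, Col3 f j (by omega)]
        intro h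
        simp only [hc1, hc4] at h
        have hv2' : A e = B f := hv2
        have hB' : B e = A f := Fcongr (A e) (B f) hv2' (B e) (A f) (hAB e) ((hAB f).symm) h
        have hef : e = f := Subtype.ext (by rw [eAB e, eAB f, hv2', hB', Sym2.eq_swap])
        subst hef
        exact (AneB e hv2').elim
      · -- i = 3, j = 0, B e = A f
        rw [Col3 e i (by omega), Col0 f j hj]
        intro h
        simp only [hc1, hc4] at h
        have hv2' : B e = A f := hv2
        have hB' : A e = B f := Fcongr (B e) (A f) hv2' (A e) (B f) ((hAB e).symm) (hAB f) h
        have hef : e = f := Subtype.ext (by rw [eAB e, eAB f, hv2'.symm, hB', Sym2.eq_swap])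
        subst hef
        exact (AneB e hv2'.symm).elim
      · -- i = 3, j = 3, B e = B f
        rw [Col3 e i (by omega), Col3 f j (by omega)]
        intro h
        simp only [hc4] at h
        have hA' : A e = A f := Fcongr (B e) (B f) hv2 (A e) (A f) ((hAB e).symm) ((hAB f).symm) h
        have hef : e = f := einj e f hA' hv2
        subst hef
        exact hne (by rw [show i = j from Fin.ext (by omega)])
    · rcases x with xu | ⟨e, i⟩ <;> rcases y with yv | ⟨f, j⟩
      · rcases hxz with ⟨hx1, hk1⟩ | ⟨hx1, hk1⟩ <;> rcases hzy with ⟨hy1, hk2⟩ | ⟨hy1, hk2⟩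
        · exact absurd (by rw [hx1, hy1]) hne
        · exfalso; omega
        · exfalso; omega
        · exact absurd (by rw [hx1, hy1]) hne
      · obtain ⟨rfl, hkj⟩ := hzy
        have hj4 := j.isLt
        rcases hxz with ⟨rfl, hk⟩ | ⟨rfl, hk⟩
        · rw [ColL, Col1 g j (by omega)]
          exact fun h => (a2p g).1 h.symm
        · rw [ColL, Col2 g j (by omega)]
          exact fun h => (a3p g).1 h.symm
      · obtain ⟨rfl, hik⟩ := hxz
        have hi4 := i.isLt
        rcases hzy with ⟨rfl, hk⟩ | ⟨rfl, hk⟩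
        · rw [Col1 e i (by omega), ColL]
          exact (a2p e).1
        · rw [Col2 e i (by omega), ColL]
          exact (a3p e).1
      · obtain ⟨rfl, h1⟩ := hxz
        obtain ⟨rfl, h2⟩ := hzy
        have hij : (i:ℕ) ≠ (j:ℕ) := fun h => hne (by rw [show i = j from Fin.ext h])
        have hi4 := i.isLt
        have hj4 := j.isLt
        have hk4 := k.isLt
        have hcases : ((i:ℕ)=0 ∧ (j:ℕ)=2) ∨ ((i:ℕ)=2 ∧ (j:ℕ)=0) ∨ ((i:ℕ)=1 ∧ (j:ℕ)=3) ∨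
            ((i:ℕ)=3 ∧ (j:ℕ)=1) := by omega
        rcases hcases with ⟨ha, hb⟩|⟨ha, hb⟩|⟨ha, hb⟩|⟨ha, hb⟩
        · rw [Col0 e i ha, Col2 e j hb]; exact fun h => (a3p e).2.1 h.symm
        · rw [Col2 e i ha, Col0 e j hb]; exact (a3p e).2.1
        · rw [Col1 e i ha, Col3 e j hb]; exact (a2p e).2.2
        · rw [Col3 e i ha, Col1 e j hb]; exact fun h => (a2p e).2.2 h.symm
  refine ⟨Col, ?_⟩
  rintro x y ⟨hne, hreach, hdist⟩
  obtain ⟨p, hp⟩ := hreach.exists_walk_length_eq_dist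
  rw [← hp] at hdist
  cases p with
  | nil => exact absurd rfl hne
  | cons hadj q =>
    cases q with
    | nil => exact L1 _ _ hadj
    | cons hadj2 q2 =>
      cases q2 with
      | nil => exact L2 _ _ _ hadj hadj2 hne
      | cons hadj3 q3 => simp [SimpleGraph.Walk.length_cons] at hdist

theorem chromatic_two_fifths {V : Type*} [Fintype V] (G : SimpleGraph V)
    [DecidableRel G.Adj] (hG : G.Connected) (hΔ : 3 ≤ G.maxDegree) :
    ((G.subdivision 5).power 2).chromaticNumber = ((G.maxDegree + 1 : ℕ) : ℕ∞) := by
  classical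
  have hne : Nonempty V := hG.nonempty
  obtain ⟨Col, hCol⟩ := exists_good_coloring G hΔ
  have hupper : ((G.subdivision 5).power 2).chromaticNumber ≤ ((G.maxDegree + 1 : ℕ) : ℕ∞) := by
    have hc : ((G.subdivision 5).power 2).Colorable (G.maxDegree + 1) :=
      ⟨SimpleGraph.Coloring.mk Col (fun hadj => hCol _ _ hadj)⟩
    exact_mod_cast hc.chromaticNumber_le
  have hlower : ((G.maxDegree + 1 : ℕ) : ℕ∞) ≤ ((G.subdivision 5).power 2).chromaticNumber := by
    obtain ⟨u, hu⟩ := G.exists_maximal_degree_vertex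
    -- near vertices of the edges at u
    set nv : {w // w ∈ G.neighborFinset u} → (V ⊕ (G.edgeSet × Fin (5 - 1))) := fun w =>
      Sum.inr (⟨s(u, w.1), (G.mem_neighborFinset u w.1).1 w.2⟩,
        if u = (Quot.out (s(u, w.1) : Sym2 V)).1 then ⟨0, by norm_num⟩ else ⟨3, by norm_num⟩)
      with hnv
    have nv_inj : Function.Injective nv := by
      intro w w' h
      simp only [hnv, Sum.inr.injEq, Prod.mk.injEq, Subtype.mk.injEq] at h
      exact Subtype.ext (Sym2.congr_right.mp (congrArg Subtype.val h.1))
    have nv_adj : ∀ w, (G.subdivision 5).Adj (Sum.inl u) (nv w) := by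
      intro w
      have hw : G.Adj u w.1 := (G.mem_neighborFinset u w.1).1 w.2
      have hout : s((Quot.out (s(u, w.1) : Sym2 V)).1, (Quot.out (s(u, w.1) : Sym2 V)).2) = s(u, w.1) := Quot.out_eq _
      rw [hnv]
      simp only []
      by_cases hcase : u = (Quot.out (s(u, w.1) : Sym2 V)).1
      · rw [if_pos hcase]
        exact Or.inl ⟨hcase, rfl⟩
      · rw [if_neg hcase]
        refine Or.inr ⟨?_, rfl⟩
        rcases Sym2.eq_iff.mp hout with ⟨h1, h2⟩ | ⟨h1, h2⟩
        · exact absurd h1.symm hcase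
        · exact h2.symm
    set S : Finset (V ⊕ (G.edgeSet × Fin (5 - 1))) :=
      insert (Sum.inl u) ((G.neighborFinset u).attach.image nv) with hS
    have hdist1 : ∀ w, ((G.subdivision 5).power 2).Adj (Sum.inl u) (nv w) := by
      intro w
      refine ⟨?_, (nv_adj w).reachable, ?_⟩
      · rw [hnv]; simp
      · refine le_trans (SimpleGraph.dist_le (SimpleGraph.Walk.cons (nv_adj w) SimpleGraph.Walk.nil)) ?_
        simp
    have hdist2 : ∀ w w', w ≠ w' → ((G.subdivision 5).power 2).Adj (nv w) (nv w') := by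
      intro w w' hww
      refine ⟨fun hh => hww (nv_inj hh), ?_, ?_⟩
      · exact ((nv_adj w).symm.reachable).trans (nv_adj w').reachable
      · refine le_trans (SimpleGraph.dist_le (SimpleGraph.Walk.cons (nv_adj w).symm
          (SimpleGraph.Walk.cons (nv_adj w') SimpleGraph.Walk.nil))) ?_
        simp
    have hclique : ((G.subdivision 5).power 2).IsClique (S : Set (V ⊕ (G.edgeSet × Fin (5 - 1)))) := by
      intro x hx y hy hxy
      simp only [hS, Finset.coe_insert, Set.mem_insert_iff, Finset.coe_image, Set.mem_image,
        Finset.mem_coe, Finset.mem_attach, true_and, Finset.mem_image] at hx hy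
      rcases hx with rfl | ⟨w, hw⟩
      · rcases hy with rfl | ⟨w', hw'⟩
        · exact absurd rfl hxy
        · rw [← hw']; exact hdist1 w'
      · rcases hy with rfl | ⟨w', hw'⟩
        · rw [← hw]; exact (hdist1 w).symm
        · rw [← hw, ← hw']
          exact hdist2 w w' (fun hh => hxy (by rw [← hw, ← hw', hh]))
    have hcard : S.card = G.maxDegree + 1 := by
      rw [hS]
      rw [Finset.card_insert_of_notMem]
      · rw [Finset.card_image_of_injective _ nv_inj, Finset.card_attach,
          card_neighborFinset_eq_degree, ← hu]
      · intro hmem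
        obtain ⟨w, -, hw⟩ := Finset.mem_image.mp hmem
        rw [hnv] at hw
        cases hw
    have := hclique.card_le_chromaticNumber
    rw [hcard] at this
    exact_mod_cast this
  exact le_antisymm hupper hlower
end

section
/- Let G be a connected graph with maximum degree Δ ≥ 3 and let m be a positive integer. Then the chromatic number of G^{m/(m+1)} equals its clique number; explicitly, it equals (m/2)Δ + 1 if m is even and ((m-1)/2)Δ + 2 if m is odd. -/
set_option linter.unusedSectionVars false
open SimpleGraph

open Finset

/-- Decompose a doubly `D`-regular ℕ-matrix into `D` permutation matrices. -/
lemma matrix_decomp {I : Type*} [Fintype I] [DecidableEq I] :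
    ∀ (D : ℕ) (M : I → I → ℕ), (∀ i, ∑ j, M i j = D) → (∀ j, ∑ i, M i j = D) →
    ∃ σ : Fin D → Equiv.Perm I, ∀ i j, M i j = ∑ c, if σ c i = j then 1 else 0 := by
  intro D
  induction D with
  | zero =>
    intro M hr _hc
    refine ⟨Fin.elim0, fun i j => ?_⟩
    have h1 : M i j ≤ ∑ j, M i j := Finset.single_le_sum (fun _ _ => Nat.zero_le _) (mem_univ j)
    simp [hr i] at h1
    simp [h1]
  | succ D ih =>
    intro M hr hc
    set t : I → Finset I := fun i => univ.filter (fun j => 0 < M i j) with ht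
    have hall : ∀ s : Finset I, #s ≤ #(s.biUnion t) := by
      intro s
      have key : (D+1) * #s ≤ (D+1) * #(s.biUnion t) := by
        calc (D+1) * #s = ∑ _i ∈ s, (D+1) := by rw [Finset.sum_const, smul_eq_mul, mul_comm]
        _ = ∑ i ∈ s, ∑ j, M i j := by
            refine Finset.sum_congr rfl fun i _ => ?_; rw [hr i]
        _ = ∑ i ∈ s, ∑ j ∈ s.biUnion t, M i j := by
            refine Finset.sum_congr rfl fun i hi => ?_
            refine (Finset.sum_subset (Finset.subset_univ _) fun j _ hj => ?_).symm
            by_contra h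
            exact hj (Finset.mem_biUnion.mpr ⟨i, hi, by simp [ht, Nat.pos_of_ne_zero h]⟩)
        _ = ∑ j ∈ s.biUnion t, ∑ i ∈ s, M i j := Finset.sum_comm
        _ ≤ ∑ j ∈ s.biUnion t, ∑ i, M i j :=
            Finset.sum_le_sum fun j _ =>
              Finset.sum_le_sum_of_subset (Finset.subset_univ s)
        _ = ∑ j ∈ s.biUnion t, (D+1) := by
            refine Finset.sum_congr rfl fun j _ => ?_; rw [hc j]
        _ = (D+1) * #(s.biUnion t) := by rw [Finset.sum_const, smul_eq_mul, mul_comm]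
      exact Nat.le_of_mul_le_mul_left key (Nat.succ_pos D)
    obtain ⟨f, hfinj, hft⟩ := (Finset.all_card_le_biUnion_card_iff_exists_injective t).mp hall
    have hfbij : Function.Bijective f := Finite.injective_iff_bijective.mp hfinj
    let σ0 : Equiv.Perm I := Equiv.ofBijective f hfbij
    have hσ0 : ∀ i, 0 < M i (σ0 i) := by
      intro i
      have := hft i
      simpa [ht, σ0, Equiv.ofBijective] using this
    set M' : I → I → ℕ := fun i j => M i j - (if σ0 i = j then 1 else 0) with hM'
    have hadd : ∀ i j, M i j = M' i j + (if σ0 i = j then 1 else 0) := by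
      intro i j
      by_cases h : σ0 i = j
      · subst h; have := hσ0 i; simp only [hM', eq_self_iff_true, if_true]; omega
      · simp [hM', h]
    have hone : ∀ j, ∑ i, (if σ0 i = j then 1 else 0) = 1 := by
      intro j
      have : ∀ i, (if σ0 i = j then (1:ℕ) else 0) = if i = σ0.symm j then 1 else 0 := by
        intro i
        by_cases h : σ0 i = j
        · rw [if_pos h, if_pos (by rw [← h]; simp)]
        · rw [if_neg h, if_neg (fun hh => h (by rw [hh]; simp))]
      rw [Finset.sum_congr rfl fun i _ => this i, Finset.sum_ite_eq' univ]
      simp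
    have hr' : ∀ i, ∑ j, M' i j = D := by
      intro i
      have h2 : ∑ j, M i j = (∑ j, M' i j) + ∑ j, (if σ0 i = j then 1 else 0) := by
        rw [← Finset.sum_add_distrib]; exact Finset.sum_congr rfl fun j _ => hadd i j
      rw [hr i] at h2
      have h3 : ∑ j, (if σ0 i = j then (1:ℕ) else 0) = 1 := by
        rw [Finset.sum_ite_eq univ]; simp
      omega
    have hc' : ∀ j, ∑ i, M' i j = D := by
      intro j
      have h2 : ∑ i, M i j = (∑ i, M' i j) + ∑ i, (if σ0 i = j then 1 else 0) := by
        rw [← Finset.sum_add_distrib]; exact Finset.sum_congr rfl fun i _ => hadd i j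
      rw [hc j] at h2
      have := hone j
      omega
    obtain ⟨σ, hσ⟩ := ih M' hr' hc'
    refine ⟨Fin.cons σ0 σ, fun i j => ?_⟩
    rw [Fin.sum_univ_succ]
    simp only [Fin.cons_zero, Fin.cons_succ]
    rw [hadd i j, hσ i j]
    omega

/-- Padding: given row and column targets with equal total, there is a matrix realizing them. -/
lemma matrix_pad {I : Type*} [Fintype I] [DecidableEq I] :
    ∀ (n : ℕ) (r c : I → ℕ), (∑ i, r i = n) → (∑ i, c i = n) →
    ∃ N : I → I → ℕ, (∀ i, ∑ j, N i j = r i) ∧ (∀ j, ∑ i, N i j = c j) := by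
  intro n
  induction n with
  | zero =>
    intro r c hr hc
    refine ⟨fun _ _ => 0, fun i => ?_, fun j => ?_⟩
    · simp; exact (Finset.sum_eq_zero_iff.mp hr i (mem_univ i)).symm
    · simp; exact (Finset.sum_eq_zero_iff.mp hc j (mem_univ j)).symm
  | succ n ih =>
    intro r c hr hc
    have hri : ∃ i, 0 < r i := by
      by_contra h
      push_neg at h
      simp only [Nat.le_zero] at h
      rw [Finset.sum_congr rfl fun i _ => h i] at hr
      simp at hr
    have hcj : ∃ j, 0 < c j := by
      by_contra h
      push_neg at h
      simp only [Nat.le_zero] at h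
      rw [Finset.sum_congr rfl fun j _ => h j] at hc
      simp at hc
    obtain ⟨i0, hi0⟩ := hri
    obtain ⟨j0, hj0⟩ := hcj
    set r' : I → ℕ := fun i => r i - (if i = i0 then 1 else 0) with hr'def
    set c' : I → ℕ := fun j => c j - (if j = j0 then 1 else 0) with hc'def
    have hradd : ∀ i, r i = r' i + (if i = i0 then 1 else 0) := by
      intro i; by_cases h : i = i0
      · subst h; simp only [hr'def, eq_self_iff_true, if_true]; omega
      · simp [hr'def, h]
    have hcadd : ∀ j, c j = c' j + (if j = j0 then 1 else 0) := by
      intro j; by_cases h : j = j0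
      · subst h; simp only [hc'def, eq_self_iff_true, if_true]; omega
      · simp [hc'def, h]
    have hr1 : ∑ i, r' i = n := by
      have h2 : ∑ i, r i = (∑ i, r' i) + ∑ i, (if i = i0 then 1 else 0) := by
        rw [← Finset.sum_add_distrib]; exact Finset.sum_congr rfl fun i _ => hradd i
      rw [hr] at h2
      rw [Finset.sum_ite_eq' univ] at h2
      simp at h2; omega
    have hc1 : ∑ j, c' j = n := by
      have h2 : ∑ j, c j = (∑ j, c' j) + ∑ j, (if j = j0 then 1 else 0) := by
        rw [← Finset.sum_add_distrib]; exact Finset.sum_congr rfl fun j _ => hcadd j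
      rw [hc] at h2
      rw [Finset.sum_ite_eq' univ] at h2
      simp at h2; omega
    obtain ⟨N, hN1, hN2⟩ := ih r' c' hr1 hc1
    refine ⟨fun i j => N i j + (if i = i0 ∧ j = j0 then 1 else 0), fun i => ?_, fun j => ?_⟩
    · rw [Finset.sum_add_distrib, hN1 i, hradd i]
      congr 1
      by_cases h : i = i0
      · subst h
        simp only [true_and]
        rw [Finset.sum_ite_eq' univ]; simp
      · simp [h]
    · rw [Finset.sum_add_distrib, hN2 j, hcadd j]
      congr 1
      by_cases h : j = j0
      · subst h
        simp only [and_true]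
        rw [Finset.sum_ite_eq' univ]; simp
      · simp [h]

section HalfEdge

open SimpleGraph

variable {V : Type*} [Fintype V] [DecidableEq V] (G : SimpleGraph V) [DecidableRel G.Adj]

lemma incidence_indicator_sum (e : Sym2 V) (he : e ∈ G.edgeSet) :
    ∑ v : V, (if e ∈ G.incidenceFinset v then 1 else 0) = 2 := by
  induction e with
  | _ a b =>
    have hab : G.Adj a b := he
    have : ∀ v : V, (if s(a,b) ∈ G.incidenceFinset v then (1:ℕ) else 0)
        = if v ∈ ({a, b} : Finset V) then 1 else 0 := by
      intro v
      congr 1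
      simp only [mem_incidenceFinset, mk'_mem_incidenceSet_iff, Finset.mem_insert,
        Finset.mem_singleton, eq_iff_iff]
      constructor
      · rintro ⟨-, h | h⟩ <;> simp [h]
      · rintro (h | h) <;> exact ⟨hab, by simp [h]⟩
    rw [Finset.sum_congr rfl fun v _ => this v, Finset.sum_ite_mem, Finset.univ_inter,
      Finset.sum_const]
    simp [Finset.card_pair hab.ne]

/-- Half-edge labeling: labels in `Fin D`, injective at every vertex,
and the two half-edges of each edge get distinct labels. -/
lemma halfedge_labeling (D : ℕ) (hD2 : 2 ≤ D) (hdeg : ∀ v, G.degree v ≤ D) :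
    ∃ ψ : V → Sym2 V → Fin D,
      (∀ v e f, e ∈ G.incidenceSet v → f ∈ G.incidenceSet v → ψ v e = ψ v f → e = f) ∧
      (∀ u v, G.Adj u v → ψ u s(u,v) ≠ ψ v s(u,v)) := by
  classical
  set I := V ⊕ Sym2 V
  set M₀ : I → I → ℕ := fun i j =>
    match i, j with
    | Sum.inl v, Sum.inr e => if e ∈ G.incidenceFinset v then 1 else 0
    | Sum.inr e, Sum.inl v => if e ∈ G.incidenceFinset v then 1 else 0
    | _, _ => 0 with hM₀
  have hsymm : ∀ i j, M₀ i j = M₀ j i := by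
    rintro (v | e) (w | f) <;> rfl
  have hrow : ∀ i, ∑ j, M₀ i j ≤ D := by
    rintro (v | e)
    · rw [Fintype.sum_sum_type]
      have h1 : ∑ a : V, M₀ (Sum.inl v) (Sum.inl a) = 0 := by simp [hM₀]
      have h2 : ∑ e : Sym2 V, M₀ (Sum.inl v) (Sum.inr e)
          = (G.incidenceFinset v).card := by
        simp only [hM₀]
        rw [Finset.sum_ite_mem, Finset.univ_inter, Finset.sum_const, smul_eq_mul, mul_one]
      rw [h1, h2, zero_add, G.card_incidenceFinset_eq_degree]
      exact hdeg v
    · rw [Fintype.sum_sum_type]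
      have h2 : ∑ f : Sym2 V, M₀ (Sum.inr e) (Sum.inr f) = 0 := by simp [hM₀]
      have h1 : ∑ a : V, M₀ (Sum.inr e) (Sum.inl a)
          = ∑ a : V, (if e ∈ G.incidenceFinset a then 1 else 0) := by
        refine Finset.sum_congr rfl fun a _ => rfl
      rw [h1, h2, add_zero]
      by_cases he : e ∈ G.edgeSet
      · rw [incidence_indicator_sum G e he]; exact hD2
      · have : ∀ a : V, (if e ∈ G.incidenceFinset a then (1:ℕ) else 0) = 0 := by
          intro a
          rw [if_neg]
          intro h
          exact he ((G.mem_incidenceFinset _ _).mp h).1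
        rw [Finset.sum_congr rfl fun a _ => this a]
        simp
  -- pad to doubly D-regular
  obtain ⟨N, hN1, hN2⟩ := matrix_pad (∑ i : I, (D - ∑ j, M₀ i j))
    (fun i => D - ∑ j, M₀ i j) (fun j => D - ∑ i, M₀ i j) rfl
    (by
      refine Finset.sum_congr rfl fun j _ => ?_
      have h : (∑ i : I, M₀ i j) = ∑ i : I, M₀ j i :=
        Finset.sum_congr rfl fun i _ => hsymm i j
      simp only [h])
  set M : I → I → ℕ := fun i j => M₀ i j + N i j with hM
  have hMrow : ∀ i, ∑ j, M i j = D := by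
    intro i
    rw [Finset.sum_add_distrib, hN1 i]
    have := hrow i
    omega
  have hMcol : ∀ j, ∑ i, M i j = D := by
    intro j
    rw [Finset.sum_add_distrib, hN2 j]
    have h1 : ∑ i, M₀ i j = ∑ i, M₀ j i := Finset.sum_congr rfl fun i _ => hsymm i j
    have := hrow j
    omega
  obtain ⟨σ, hσ⟩ := matrix_decomp D M hMrow hMcol
  have hex : ∀ v (e : Sym2 V), e ∈ G.incidenceSet v → ∃ c, σ c (Sum.inl v) = Sum.inr e := by
    intro v e he
    by_contra h
    push_neg at h
    have h0 : M (Sum.inl v) (Sum.inr e) = 0 :=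
      (hσ _ _).trans (Finset.sum_eq_zero fun c _ => if_neg (h c))
    have h1 : 1 ≤ M (Sum.inl v) (Sum.inr e) := by
      have : M₀ (Sum.inl v) (Sum.inr e) = 1 := if_pos ((G.mem_incidenceFinset _ _).mpr he)
      calc 1 = M₀ (Sum.inl v) (Sum.inr e) := this.symm
      _ ≤ M (Sum.inl v) (Sum.inr e) := Nat.le_add_right _ _
    omega
  have hD0 : 0 < D := by omega
  set ψ : V → Sym2 V → Fin D := fun v e =>
    if h : ∃ c, σ c (Sum.inl v) = Sum.inr e then h.choose else ⟨0, hD0⟩ with hψ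
  have hspec : ∀ v e, e ∈ G.incidenceSet v → σ (ψ v e) (Sum.inl v) = Sum.inr e := by
    intro v e he
    have h := hex v e he
    simp only [hψ]
    rw [dif_pos h]
    exact h.choose_spec
  refine ⟨ψ, ?_, ?_⟩
  · intro v e f he hf hef
    have h1 := hspec v e he
    rw [hef, hspec v f hf] at h1
    exact (Sum.inr_injective h1).symm
  · intro u v huv hcon
    have h1 := hspec u s(u,v) ((G.mem_incidenceSet u v).mpr huv)
    have h2 := hspec v s(u,v) (G.mk'_mem_incidenceSet_right_iff.mpr huv)
    rw [hcon] at h1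
    have h3 := (σ (ψ v s(u,v))).injective (h1.trans h2.symm)
    exact huv.ne (Sum.inl_injective h3)

end HalfEdge

section Subdiv

open SimpleGraph

variable {V : Type*} [DecidableEq V] {G : SimpleGraph V} (m : ℕ)

/-- first endpoint of the fixed orientation of an edge -/
noncomputable def eA (e : G.edgeSet) : V := (Quot.out (e : Sym2 V)).1

/-- second endpoint of the fixed orientation of an edge -/
noncomputable def eB (e : G.edgeSet) : V := (Quot.out (e : Sym2 V)).2

variable {m}

lemma mk_eA_eB (e : G.edgeSet) : s(eA e, eB e) = (e : Sym2 V) := by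
  rw [eA, eB, Sym2.mk, Prod.mk.eta]
  exact Quot.out_eq _

lemma adj_eA_eB (e : G.edgeSet) : G.Adj (eA e) (eB e) := by
  have h := e.2
  rw [← mk_eA_eB e] at h
  exact h

lemma eA_mem (e : G.edgeSet) : eA e ∈ (e : Sym2 V) := by
  rw [← mk_eA_eB e]; exact Sym2.mem_mk_left _ _

lemma eB_mem (e : G.edgeSet) : eB e ∈ (e : Sym2 V) := by
  rw [← mk_eA_eB e]; exact Sym2.mem_mk_right _ _

abbrev SubV (G : SimpleGraph V) (m : ℕ) := V ⊕ (G.edgeSet × Fin (m + 1 - 1))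

lemma sub_adj_ll {u v : V} :
    (G.subdivision (m+1)).Adj (Sum.inl u) (Sum.inl v) ↔ (m + 1 = 1 ∧ G.Adj u v) :=
  Iff.rfl

lemma sub_adj_lr {u : V} {e : G.edgeSet} {i : Fin (m + 1 - 1)} :
    (G.subdivision (m+1)).Adj (Sum.inl u) (Sum.inr (e, i)) ↔
      ((u = eA e ∧ (i : ℕ) = 0) ∨ (u = eB e ∧ (i : ℕ) = m - 1)) :=
  Iff.rfl

lemma sub_adj_rl {u : V} {e : G.edgeSet} {i : Fin (m + 1 - 1)} :
    (G.subdivision (m+1)).Adj (Sum.inr (e, i)) (Sum.inl u) ↔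
      ((u = eA e ∧ (i : ℕ) = 0) ∨ (u = eB e ∧ (i : ℕ) = m - 1)) :=
  Iff.rfl

lemma sub_adj_rr {e f : G.edgeSet} {i j : Fin (m + 1 - 1)} :
    (G.subdivision (m+1)).Adj (Sum.inr (e, i)) (Sum.inr (f, j)) ↔
      (e = f ∧ ((i : ℕ) + 1 = (j : ℕ) ∨ (j : ℕ) + 1 = (i : ℕ))) :=
  Iff.rfl

variable (m)

/-- distance-like base function from an internal point of edge `e` to branch vertices -/
noncomputable def gbase (e : G.edgeSet) (i : ℕ) (w : V) : ℕ :=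
  min ((i + 1) + (m + 1) * G.dist (eA e) w) ((m - i) + (m + 1) * G.dist (eB e) w)

/-- potential function: a 1-Lipschitz lower bound for graph distance in the subdivision -/
noncomputable def pot : SubV G m → SubV G m → ℕ
  | Sum.inl u, Sum.inl w => (m + 1) * G.dist u w
  | Sum.inl u, Sum.inr (f, j) =>
      min ((m + 1) * G.dist u (eA f) + ((j : ℕ) + 1))
          ((m + 1) * G.dist u (eB f) + (m - (j : ℕ)))
  | Sum.inr (e, i), Sum.inl w => gbase m e (i : ℕ) w
  | Sum.inr (e, i), Sum.inr (f, j) =>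
      if e = f then ((i : ℕ) - (j : ℕ)) + ((j : ℕ) - (i : ℕ))
      else min (gbase m e (i : ℕ) (eA f) + ((j : ℕ) + 1))
               (gbase m e (i : ℕ) (eB f) + (m - (j : ℕ)))

variable {m}

lemma pot_self (x : SubV G m) : pot m x x = 0 := by
  rcases x with u | ⟨e, i⟩
  · simp [pot]
  · simp [pot]

lemma dist_lip (hG : G.Connected) (u a b : V) (hab : G.Adj a b) :
    G.dist u b ≤ G.dist u a + 1 := by
  have h1 := hG.dist_triangle (u := u) (v := a) (w := b)
  have h2 : G.dist a b ≤ 1 := by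
    have := SimpleGraph.dist_le hab.toWalk
    simpa using this
  omega

lemma pot_lip (hG : G.Connected) (hm : 0 < m) (x : SubV G m) :
    ∀ z z' : SubV G m, (G.subdivision (m+1)).Adj z z' → pot m x z' ≤ pot m x z + 1 := by
  -- auxiliary facts about the base functions
  have gb_lip : ∀ (e : G.edgeSet) (i : ℕ), i < m →
      ∀ a b, G.Adj a b → gbase m e i b ≤ gbase m e i a + (m + 1) := by
    intro e i _hi a b hab
    rw [gbase, gbase]
    have h1 := dist_lip hG (eA e) a b hab
    have h2 := dist_lip hG (eB e) a b hab
    have h3 : (m+1) * G.dist (eA e) b ≤ (m+1) * (G.dist (eA e) a + 1) :=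
      Nat.mul_le_mul_left _ h1
    have h4 : (m+1) * G.dist (eB e) b ≤ (m+1) * (G.dist (eB e) a + 1) :=
      Nat.mul_le_mul_left _ h2
    rw [Nat.mul_add, Nat.mul_one] at h3 h4
    rcases le_total ((i + 1) + (m + 1) * G.dist (eA e) a) ((m - i) + (m + 1) * G.dist (eB e) a)
      with hc | hc
    · have := min_le_left ((i + 1) + (m + 1) * G.dist (eA e) b)
        ((m - i) + (m + 1) * G.dist (eB e) b)
      have hmin : min ((i + 1) + (m + 1) * G.dist (eA e) b)
        ((m - i) + (m + 1) * G.dist (eB e) b) ≤ (i + 1) + (m + 1) * G.dist (eA e) b :=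
        min_le_of_left_le le_rfl
      have hle : min ((i + 1) + (m + 1) * G.dist (eA e) b)
          ((m - i) + (m + 1) * G.dist (eB e) b) ≤ (i + 1) + (m + 1) * G.dist (eA e) b :=
        min_le_left _ _
      have hgoal : min ((i + 1) + (m + 1) * G.dist (eA e) a)
          ((m - i) + (m + 1) * G.dist (eB e) a) = (i + 1) + (m + 1) * G.dist (eA e) a :=
        min_eq_left hc
      omega
    · have hle : min ((i + 1) + (m + 1) * G.dist (eA e) b)
          ((m - i) + (m + 1) * G.dist (eB e) b) ≤ (m - i) + (m + 1) * G.dist (eB e) b :=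
        min_le_right _ _
      have hgoal : min ((i + 1) + (m + 1) * G.dist (eA e) a)
          ((m - i) + (m + 1) * G.dist (eB e) a) = (m - i) + (m + 1) * G.dist (eB e) a :=
        min_eq_right hc
      omega
  have dist_lip' : ∀ (u a b : V), G.Adj a b →
      (m+1) * G.dist u b ≤ (m+1) * G.dist u a + (m+1) := by
    intro u a b hab
    have h1 := dist_lip hG u a b hab
    have h3 : (m+1) * G.dist u b ≤ (m+1) * (G.dist u a + 1) := Nat.mul_le_mul_left _ h1
    rw [Nat.mul_add, Nat.mul_one] at h3
    exact h3
  -- the base function of x, and its (m+1)-Lipschitz property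
  set g : V → ℕ := fun w => pot m x (Sum.inl w) with hg
  have hglip : ∀ a b, G.Adj a b → g b ≤ g a + (m + 1) := by
    intro a b hab
    rcases x with u | ⟨e, i⟩
    · exact dist_lip' u a b hab
    · exact gb_lip e (i : ℕ) (by have := i.isLt; omega) a b hab
  -- pot m x at non-special internal vertices
  have hpotr : ∀ (f : G.edgeSet) (j : Fin (m+1-1)),
      (∀ (e : G.edgeSet) (i : Fin (m+1-1)), x = Sum.inr (e, i) → e ≠ f) →
      pot m x (Sum.inr (f, j)) = min (g (eA f) + ((j:ℕ)+1)) (g (eB f) + (m - (j:ℕ))) := by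
    intro f j hx
    rcases x with u | ⟨e, i⟩
    · rfl
    · have hne : e ≠ f := hx e i rfl
      simp only [pot, if_neg hne]
      rfl
  intro z z' hadj
  rcases z with w | ⟨f, j⟩ <;> rcases z' with w' | ⟨f', j'⟩
  · rw [sub_adj_ll] at hadj; omega
  · -- inl w ~ inr (f', j')
    rw [sub_adj_lr] at hadj
    by_cases hsp : ∃ (e : G.edgeSet) (i : Fin (m+1-1)), x = Sum.inr (e, i) ∧ e = f'
    · obtain ⟨e, i, hx, rfl⟩ := hsp
      subst hx
      -- pot value at inr (e, j') is |i - j'|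
      have hv : pot m (Sum.inr (e, i)) (Sum.inr (e, j')) =
          ((i:ℕ) - (j':ℕ)) + ((j':ℕ) - (i:ℕ)) := by simp [pot]
      have hw : pot m (Sum.inr (e, i)) (Sum.inl w) = gbase m e (i:ℕ) w := rfl
      rw [hv, hw]
      have hiLt : (i : ℕ) < m := by have := i.isLt; omega
      have hjLt : (j' : ℕ) < m := by have := j'.isLt; omega
      rcases hadj with ⟨rfl, hj0⟩ | ⟨rfl, hjm⟩
      · -- w = eA e, j' = 0
        rw [gbase]
        have hd : G.dist (eA e) (eA e) = 0 := by simp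
        have hd2 : 1 ≤ G.dist (eB e) (eA e) := by
          have hne := (adj_eA_eB e).ne
          have : G.dist (eB e) (eA e) ≠ 0 :=
            fun h0 => hne (hG.dist_eq_zero_iff.mp h0).symm
          omega
        have h1 : (m+1) * 1 ≤ (m+1) * G.dist (eB e) (eA e) := Nat.mul_le_mul_left _ hd2
        rw [hd]
        rcases le_total (((i:ℕ) + 1) + (m + 1) * 0) ((m - (i:ℕ)) + (m + 1) * G.dist (eB e) (eA e))
          with hc | hc
        · rw [min_eq_left hc]; omega
        · rw [min_eq_right hc]; omega
      · -- w = eB e, j' = m - 1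
        rw [gbase]
        have hd : G.dist (eB e) (eB e) = 0 := by simp
        have hd2 : 1 ≤ G.dist (eA e) (eB e) := by
          have hne := (adj_eA_eB e).ne
          have : G.dist (eA e) (eB e) ≠ 0 :=
            fun h0 => hne (hG.dist_eq_zero_iff.mp h0)
          omega
        have h1 : (m+1) * 1 ≤ (m+1) * G.dist (eA e) (eB e) := Nat.mul_le_mul_left _ hd2
        rw [hd]
        rcases le_total (((i:ℕ) + 1) + (m + 1) * G.dist (eA e) (eB e)) ((m - (i:ℕ)) + (m + 1) * 0)
          with hc | hc
        · rw [min_eq_left hc]; omega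
        · rw [min_eq_right hc]; omega
    · -- generic case
      push_neg at hsp
      rw [hpotr f' j' (fun e i hx => hsp e i hx)]
      have hjLt : (j' : ℕ) < m := by have := j'.isLt; omega
      rcases hadj with ⟨rfl, hj0⟩ | ⟨rfl, hjm⟩
      · have hle : min (g (eA f') + ((j':ℕ)+1)) (g (eB f') + (m - (j':ℕ)))
            ≤ g (eA f') + ((j':ℕ)+1) := min_le_left _ _
        have hgz : pot m x (Sum.inl (eA f')) = g (eA f') := rfl
        omega
      · have hle : min (g (eA f') + ((j':ℕ)+1)) (g (eB f') + (m - (j':ℕ)))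
            ≤ g (eB f') + (m - (j':ℕ)) := min_le_right _ _
        have hgz : pot m x (Sum.inl (eB f')) = g (eB f') := rfl
        omega
  · -- inr (f, j) ~ inl w'
    rw [sub_adj_rl] at hadj
    have hjLt : (j : ℕ) < m := by have := j.isLt; omega
    by_cases hsp : ∃ (e : G.edgeSet) (i : Fin (m+1-1)), x = Sum.inr (e, i) ∧ e = f
    · obtain ⟨e, i, hx, rfl⟩ := hsp
      subst hx
      have hv : pot m (Sum.inr (e, i)) (Sum.inr (e, j)) =
          ((i:ℕ) - (j:ℕ)) + ((j:ℕ) - (i:ℕ)) := by simp [pot]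
      have hiLt : (i : ℕ) < m := by have := i.isLt; omega
      rcases hadj with ⟨rfl, hj0⟩ | ⟨rfl, hjm⟩
      · have hw : pot m (Sum.inr (e, i)) (Sum.inl (eA e)) = gbase m e (i:ℕ) (eA e) := rfl
        rw [hv, hw, gbase]
        have hd : G.dist (eA e) (eA e) = 0 := by simp
        rw [hd]
        have hle : min ((i + 1) + (m + 1) * 0) ((m - i) + (m + 1) * G.dist (eB e) (eA e))
            ≤ (i + 1) + (m + 1) * 0 := min_le_left _ _
        omega
      · have hw : pot m (Sum.inr (e, i)) (Sum.inl (eB e)) = gbase m e (i:ℕ) (eB e) := rfl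
        rw [hv, hw, gbase]
        have hd : G.dist (eB e) (eB e) = 0 := by simp
        rw [hd]
        have hle : min ((i + 1) + (m + 1) * G.dist (eA e) (eB e)) ((m - i) + (m + 1) * 0)
            ≤ (m - i) + (m + 1) * 0 := min_le_right _ _
        omega
    · push_neg at hsp
      rw [hpotr f j (fun e i hx => hsp e i hx)]
      rcases hadj with ⟨rfl, hj0⟩ | ⟨rfl, hjm⟩
      · have hgz : pot m x (Sum.inl (eA f)) = g (eA f) := rfl
        have hlipAB : g (eB f) ≤ g (eA f) + (m+1) := hglip _ _ (adj_eA_eB f)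
        have hlipBA : g (eA f) ≤ g (eB f) + (m+1) := hglip _ _ (adj_eA_eB f).symm
        rw [hgz]
        rcases le_total (g (eA f) + ((j:ℕ)+1)) (g (eB f) + (m - (j:ℕ))) with hc | hc
        · rw [min_eq_left hc]; omega
        · rw [min_eq_right hc]; omega
      · have hgz : pot m x (Sum.inl (eB f)) = g (eB f) := rfl
        have hlipBA : g (eA f) ≤ g (eB f) + (m+1) := hglip _ _ (adj_eA_eB f).symm
        have hlipAB : g (eB f) ≤ g (eA f) + (m+1) := hglip _ _ (adj_eA_eB f)
        rw [hgz]
        rcases le_total (g (eA f) + ((j:ℕ)+1)) (g (eB f) + (m - (j:ℕ))) with hc | hc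
        · rw [min_eq_left hc]; omega
        · rw [min_eq_right hc]; omega
  · -- inr (f, j) ~ inr (f', j')
    rw [sub_adj_rr] at hadj
    obtain ⟨rfl, hstep⟩ := hadj
    have hjLt : (j : ℕ) < m := by have := j.isLt; omega
    have hjLt' : (j' : ℕ) < m := by have := j'.isLt; omega
    by_cases hsp : ∃ (e : G.edgeSet) (i : Fin (m+1-1)), x = Sum.inr (e, i) ∧ e = f
    · obtain ⟨e, i, hx, rfl⟩ := hsp
      subst hx
      have hv : ∀ jj : Fin (m+1-1), pot m (Sum.inr (e, i)) (Sum.inr (e, jj)) =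
          ((i:ℕ) - (jj:ℕ)) + ((jj:ℕ) - (i:ℕ)) := by intro jj; simp [pot]
      rw [hv, hv]
      omega
    · push_neg at hsp
      rw [hpotr f j (fun e i hx => hsp e i hx), hpotr f j' (fun e i hx => hsp e i hx)]
      rcases le_total (g (eA f) + ((j:ℕ)+1)) (g (eB f) + (m - (j:ℕ))) with hc | hc
      · rw [min_eq_left hc]
        have hle : min (g (eA f) + ((j':ℕ)+1)) (g (eB f) + (m - (j':ℕ)))
            ≤ g (eA f) + ((j':ℕ)+1) := min_le_left _ _
        omega
      · rw [min_eq_right hc]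
        have hle : min (g (eA f) + ((j':ℕ)+1)) (g (eB f) + (m - (j':ℕ)))
            ≤ g (eB f) + (m - (j':ℕ)) := min_le_right _ _
        omega

lemma pot_le_walk (hG : G.Connected) (hm : 0 < m) (x : SubV G m) :
    ∀ {a b : SubV G m} (p : (G.subdivision (m+1)).Walk a b),
      pot m x b ≤ pot m x a + p.length := by
  intro a b p
  induction p with
  | nil => simp
  | cons h p ih =>
    have h1 := pot_lip hG hm x _ _ h
    simp only [SimpleGraph.Walk.length_cons]
    omega

lemma pot_le_of_power_adj (hG : G.Connected) (hm : 0 < m) {x y : SubV G m}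
    (h : ((G.subdivision (m+1)).power m).Adj x y) : pot m x y ≤ m := by
  obtain ⟨hne, hr, hd⟩ := h
  obtain ⟨p, hp⟩ := hr.exists_walk_length_eq_dist
  have h1 := pot_le_walk hG hm x p
  rw [pot_self] at h1
  omega

end Subdiv

section Walks

open SimpleGraph

variable {V : Type*} [DecidableEq V] {G : SimpleGraph V} {m : ℕ}

lemma exists_walkA (hm : 0 < m) (e : G.edgeSet) :
    ∀ (i : ℕ) (h : i < m), ∃ p : (G.subdivision (m+1)).Walk (Sum.inl (eA e))
      (Sum.inr (e, ⟨i, by omega⟩)), p.length = i + 1 := by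
  intro i
  induction i with
  | zero =>
    intro h
    have hadj : (G.subdivision (m+1)).Adj (Sum.inl (eA e)) (Sum.inr (e, ⟨0, by omega⟩)) :=
      sub_adj_lr.mpr (Or.inl ⟨rfl, rfl⟩)
    exact ⟨Walk.cons hadj Walk.nil, by simp⟩
  | succ i ih =>
    intro h
    obtain ⟨p, hp⟩ := ih (by omega)
    have hadj : (G.subdivision (m+1)).Adj (Sum.inr (e, (⟨i, by omega⟩ : Fin (m+1-1))))
        (Sum.inr (e, ⟨i+1, by omega⟩)) :=
      sub_adj_rr.mpr ⟨rfl, Or.inl rfl⟩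
    exact ⟨p.concat hadj, by rw [Walk.length_concat, hp]⟩

lemma exists_walkB (hm : 0 < m) (e : G.edgeSet) :
    ∀ (k : ℕ) (i : ℕ) (h : i < m), m - 1 - i = k →
      ∃ p : (G.subdivision (m+1)).Walk (Sum.inl (eB e))
        (Sum.inr (e, ⟨i, by omega⟩)), p.length = m - i := by
  intro k
  induction k with
  | zero =>
    intro i h hk
    have hadj : (G.subdivision (m+1)).Adj (Sum.inl (eB e)) (Sum.inr (e, ⟨i, by omega⟩)) :=
      sub_adj_lr.mpr (Or.inr ⟨rfl, by simp; omega⟩)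
    exact ⟨Walk.cons hadj Walk.nil, by simp; omega⟩
  | succ k ih =>
    intro i h hk
    obtain ⟨p, hp⟩ := ih (i+1) (by omega) (by omega)
    have hadj : (G.subdivision (m+1)).Adj (Sum.inr (e, (⟨i+1, by omega⟩ : Fin (m+1-1))))
        (Sum.inr (e, ⟨i, by omega⟩)) :=
      sub_adj_rr.mpr ⟨rfl, Or.inr rfl⟩
    exact ⟨p.concat hadj, by rw [Walk.length_concat, hp]; omega⟩

lemma exists_walk_hub (hm : 0 < m) (e : G.edgeSet) (v0 : V)
    (hv0 : v0 ∈ (e : Sym2 V)) (i : ℕ) (h : i < m) :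
    ∃ p : (G.subdivision (m+1)).Walk (Sum.inl v0) (Sum.inr (e, ⟨i, by omega⟩)),
      p.length = (if v0 = eA e then i + 1 else m - i) := by
  by_cases hA : v0 = eA e
  · subst hA
    obtain ⟨p, hp⟩ := exists_walkA hm e i h
    exact ⟨p, by rw [if_pos rfl]; exact hp⟩
  · have hB : v0 = eB e := by
      rw [← mk_eA_eB e, Sym2.mem_iff] at hv0
      tauto
    subst hB
    obtain ⟨p, hp⟩ := exists_walkB hm e (m-1-i) i h rfl
    exact ⟨p, by rw [if_neg hA]; exact hp⟩

end Walks

section CliquePart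

open SimpleGraph Finset

variable {V : Type*} [Fintype V] [DecidableEq V] {G : SimpleGraph V} [DecidableRel G.Adj]

lemma exists_clique (hG : G.Connected) (m : ℕ) (hm : 0 < m) (hΔ : 3 ≤ G.maxDegree) :
    ∃ s : Finset (SubV G m), ((G.subdivision (m+1)).power m).IsNClique
      (m / 2 * G.maxDegree + (if Even m then 1 else 2)) s := by
  classical
  haveI : Nonempty V := by
    by_contra h
    rw [not_nonempty_iff] at h
    have h0 := G.maxDegree_le_of_forall_degree_le 0 (fun v => (h.false v).elim)
    omega
  obtain ⟨v0, hv0deg⟩ := G.exists_maximal_degree_vertex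
  set H := m / 2 with hH
  have hHm : H < m := by omega
  set D := G.incidenceFinset v0 with hD
  have hDcard : D.card = G.maxDegree := by
    rw [hD, G.card_incidenceFinset_eq_degree, ← hv0deg]
  have hDedge : ∀ es ∈ D, es ∈ G.edgeSet :=
    fun es hes => ((G.mem_incidenceFinset _ _).mp hes).1
  have hDmem : ∀ es ∈ D, v0 ∈ es :=
    fun es hes => ((G.mem_incidenceFinset _ _).mp hes).2
  obtain ⟨e0, he0⟩ := Finset.card_pos.mp (show 0 < D.card by rw [hDcard]; omega)
  set ι : Sym2 V × ℕ → SubV G m := fun p =>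
    if hes : p.1 ∈ G.edgeSet then
      Sum.inr (⟨p.1, hes⟩,
        ⟨(if v0 = eA (⟨p.1, hes⟩ : G.edgeSet) then p.2 else m - 1 - p.2) % m,
          by have := Nat.mod_lt ((if v0 = eA (⟨p.1, hes⟩ : G.edgeSet) then p.2
              else m - 1 - p.2)) hm; omega⟩)
    else Sum.inl v0
    with hι
  set S1 := (D ×ˢ Finset.range H).image ι with hS1
  set mid : SubV G m := Sum.inr (⟨e0, hDedge e0 he0⟩,
    ⟨H % m, by have := Nat.mod_lt H hm; omega⟩) with hmid
  have hHmod : H % m = H := Nat.mod_eq_of_lt hHm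
  set midF : Finset (SubV G m) := if Even m then ∅ else {mid} with hmidF
  set C := insert (Sum.inl v0) (S1 ∪ midF) with hC
  -- basic facts about ι on D
  have hιval : ∀ es (hes : es ∈ G.edgeSet) (t : ℕ),
      ι (es, t) = Sum.inr (⟨es, hes⟩,
        ⟨(if v0 = eA (⟨es, hes⟩ : G.edgeSet) then t else m - 1 - t) % m,
          by have := Nat.mod_lt ((if v0 = eA (⟨es, hes⟩ : G.edgeSet) then t
              else m - 1 - t)) hm; omega⟩) := by
    intro es hes t
    simp only [hι, dif_pos hes]
  have hinj : Set.InjOn ι ↑(D ×ˢ Finset.range H) := by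
    intro p hp q hq hpq
    obtain ⟨es, t⟩ := p
    obtain ⟨es', t'⟩ := q
    rw [Finset.mem_coe, Finset.mem_product, Finset.mem_range] at hp hq
    obtain ⟨hp1, hp2⟩ := hp
    obtain ⟨hq1, hq2⟩ := hq
    rw [hιval es (hDedge es hp1) t, hιval es' (hDedge es' hq1) t'] at hpq
    simp only [Sum.inr.injEq, Prod.mk.injEq, Subtype.mk.injEq, Fin.mk.injEq] at hpq
    obtain ⟨rfl, hidx⟩ := hpq
    have ht : t % m = t := Nat.mod_eq_of_lt (by omega)
    have ht' : t' % m = t' := Nat.mod_eq_of_lt (by omega)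
    have htm : (m - 1 - t) % m = m - 1 - t := Nat.mod_eq_of_lt (by omega)
    have htm' : (m - 1 - t') % m = m - 1 - t' := Nat.mod_eq_of_lt (by omega)
    by_cases hcond : v0 = eA (⟨es, hDedge es hp1⟩ : G.edgeSet)
    · rw [if_pos hcond, if_pos hcond, ht, ht'] at hidx
      exact Prod.ext rfl hidx
    · rw [if_neg hcond, if_neg hcond, htm, htm'] at hidx
      refine Prod.ext rfl ?_
      simp only
      omega
  have hS1card : S1.card = G.maxDegree * H := by
    rw [hS1, Finset.card_image_of_injOn hinj, Finset.card_product, Finset.card_range, hDcard]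
  have hS1inr : ∀ z ∈ S1, ∃ (e : G.edgeSet) (i : Fin (m+1-1)), z = Sum.inr (e, i) ∧
      (e : Sym2 V) ∈ D ∧
      ((v0 = eA e ∧ (i : ℕ) < H) ∨ (v0 ≠ eA e ∧ (i : ℕ) = m - 1 - (m - 1 - (i:ℕ)) ∧
        m - 1 - (i : ℕ) < H ∧ H ≤ (i:ℕ))) := by
    intro z hz
    rw [hS1, Finset.mem_image] at hz
    obtain ⟨⟨es, t⟩, hmem, rfl⟩ := hz
    rw [Finset.mem_product, Finset.mem_range] at hmem
    obtain ⟨hes1, ht⟩ := hmem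
    have hes := hDedge es hes1
    rw [hιval es hes t]
    refine ⟨⟨es, hes⟩, _, rfl, hes1, ?_⟩
    by_cases hcond : v0 = eA (⟨es, hes⟩ : G.edgeSet)
    · left
      refine ⟨hcond, ?_⟩
      simp only [if_pos hcond]
      rw [Nat.mod_eq_of_lt (by omega)]
      exact ht
    · right
      refine ⟨hcond, ?_⟩
      simp only [if_neg hcond]
      rw [Nat.mod_eq_of_lt (by omega)]
      omega
  -- walks from the hub
  have hwalkS1 : ∀ z ∈ S1, ∃ p : (G.subdivision (m+1)).Walk (Sum.inl v0) z,
      2 * p.length ≤ m := by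
    intro z hz
    obtain ⟨e, i, rfl, heD, hcase⟩ := hS1inr z hz
    have hv0e : v0 ∈ (e : Sym2 V) := hDmem _ heD
    obtain ⟨p, hp⟩ := exists_walk_hub hm e v0 hv0e (i : ℕ) (by have := i.isLt; omega)
    refine ⟨p, ?_⟩
    rw [hp]
    rcases hcase with ⟨hA, hlt⟩ | ⟨hA, heq, hlt, hge⟩
    · rw [if_pos hA]; omega
    · rw [if_neg hA]
      have hiLt : (i : ℕ) < m := by have := i.isLt; omega
      omega
  have hwalkMid : ¬ Even m → ∃ p : (G.subdivision (m+1)).Walk (Sum.inl v0) mid,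
      2 * p.length ≤ m + 1 := by
    intro hodd
    have hm2 : m % 2 = 1 := Nat.not_even_iff.mp hodd
    have hv0e : v0 ∈ ((⟨e0, hDedge e0 he0⟩ : G.edgeSet) : Sym2 V) := hDmem _ he0
    obtain ⟨p, hp⟩ := exists_walk_hub hm ⟨e0, hDedge e0 he0⟩ v0 hv0e (H % m)
      (by have := Nat.mod_lt H hm; omega)
    refine ⟨p, ?_⟩
    rw [hp, hHmod]
    by_cases hA : v0 = eA (⟨e0, hDedge e0 he0⟩ : G.edgeSet)
    · rw [if_pos hA]; omega
    · rw [if_neg hA]; omega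
  -- membership split
  have hmemC : ∀ z ∈ C, z = Sum.inl v0 ∨ z ∈ S1 ∨ (¬ Even m ∧ z = mid) := by
    intro z hz
    rw [hC, Finset.mem_insert, Finset.mem_union] at hz
    rcases hz with h | h | h
    · exact Or.inl h
    · exact Or.inr (Or.inl h)
    · rw [hmidF] at h
      by_cases hev : Even m
      · rw [if_pos hev] at h; simp at h
      · rw [if_neg hev] at h
        rw [Finset.mem_singleton] at h
        exact Or.inr (Or.inr ⟨hev, h⟩)
  -- walk for any non-center element
  have hwalkAny : ∀ z ∈ C, z ≠ Sum.inl v0 →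
      ∃ p : (G.subdivision (m+1)).Walk (Sum.inl v0) z,
        2 * p.length ≤ m + 1 ∧ (z ≠ mid → 2 * p.length ≤ m) := by
    intro z hz hne
    rcases hmemC z hz with h | h | ⟨hodd, rfl⟩
    · exact absurd h hne
    · obtain ⟨p, hp⟩ := hwalkS1 z h
      exact ⟨p, by omega, fun _ => hp⟩
    · obtain ⟨p, hp⟩ := hwalkMid hodd
      refine ⟨p, hp, fun hc => absurd rfl hc⟩
  -- the clique
  refine ⟨C, (SimpleGraph.isNClique_iff _).mpr ⟨?_, ?_⟩⟩
  · intro x hx y hy hne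
    rw [Finset.mem_coe] at hx hy
    by_cases hxc : x = Sum.inl v0
    · subst hxc
      obtain ⟨p, hp1, _⟩ := hwalkAny y hy (fun h => hne h.symm)
      exact ⟨hne, ⟨p⟩, le_trans (SimpleGraph.dist_le p) (by omega)⟩
    · by_cases hyc : y = Sum.inl v0
      · subst hyc
        obtain ⟨p, hp1, _⟩ := hwalkAny x hx hxc
        exact ⟨hne, ⟨p.reverse⟩, le_trans (SimpleGraph.dist_le p.reverse)
          (by rw [SimpleGraph.Walk.length_reverse]; omega)⟩
      · obtain ⟨p, hp1, hp2⟩ := hwalkAny x hx hxc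
        obtain ⟨q, hq1, hq2⟩ := hwalkAny y hy hyc
        have hlen : p.length + q.length ≤ m := by
          by_cases hxm : x = mid
          · subst hxm
            have hym : y ≠ mid := fun h => hne (h ▸ rfl)
            have := hq2 hym
            omega
          · have := hp2 hxm
            omega
        have hw := SimpleGraph.dist_le (p.reverse.append q)
        rw [SimpleGraph.Walk.length_append, SimpleGraph.Walk.length_reverse] at hw
        exact ⟨hne, ⟨p.reverse.append q⟩, by omega⟩
  · -- cardinality
    have hinl : Sum.inl v0 ∉ S1 ∪ midF := by
      rw [Finset.mem_union]
      rintro (h | h)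
      · obtain ⟨e, i, heq, -⟩ := hS1inr _ h
        exact Sum.inl_ne_inr heq
      · rw [hmidF] at h
        by_cases hev : Even m
        · rw [if_pos hev] at h; simp at h
        · rw [if_neg hev, Finset.mem_singleton] at h
          exact Sum.inl_ne_inr h
    have hmidS1 : ¬ Even m → mid ∉ S1 := by
      intro hodd hmem
      obtain ⟨e, i, heq, heD, hcase⟩ := hS1inr _ hmem
      rw [hmid] at heq
      have hival : (i : ℕ) = H := by
        have := congrArg (fun z => match z with
          | Sum.inr (_, j) => (j : ℕ)
          | Sum.inl _ => 0) heq
        simpa [hHmod] using this.symm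
      have hm2 : m % 2 = 1 := Nat.not_even_iff.mp hodd
      rcases hcase with ⟨-, hlt⟩ | ⟨-, -, hlt, hge⟩ <;> omega
    rw [hC, Finset.card_insert_of_notMem hinl]
    by_cases hev : Even m
    · rw [hmidF, if_pos hev, Finset.union_empty, hS1card, if_pos hev]
      ring
    · rw [hmidF, if_neg hev]
      rw [Finset.union_comm, ← Finset.insert_eq,
        Finset.card_insert_of_notMem (hmidS1 hev), hS1card, if_neg hev]
      ring

end CliquePart

section ColoringPart

open SimpleGraph Finset

variable {V : Type*} [Fintype V] [DecidableEq V] {G : SimpleGraph V} [DecidableRel G.Adj]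

lemma exists_coloring (hG : G.Connected) (m : ℕ) (hm : 0 < m) (hΔ : 3 ≤ G.maxDegree) :
    ((G.subdivision (m+1)).power m).Colorable
      (m / 2 * G.maxDegree + (if Even m then 1 else 2)) := by
  classical
  set Δ := G.maxDegree with hΔdef
  have hΔpos : 0 < Δ := by omega
  set H := m / 2 with hH
  set K := H * Δ + (if Even m then 1 else 2) with hK
  have hKite : (if Even m then 1 else 2) = 1 ∨ (if Even m then 1 else 2) = 2 := by
    by_cases h : Even m
    · left; rw [if_pos h]
    · right; rw [if_neg h]
  obtain ⟨ψ, hψinj, hψsep⟩ := halfedge_labeling G Δ (by omega) (fun v => G.degree_le_maxDegree v)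
  -- the color function
  set body : G.edgeSet × Fin (m+1-1) → ℕ := fun p =>
    if 2 * ((p.2 : ℕ)) + 1 = m then H * Δ + 1
    else if (p.2 : ℕ) + 1 < m - (p.2 : ℕ) then
      (p.2 : ℕ) * Δ + (ψ (eA p.1) (p.1 : Sym2 V)).val + 1
    else (m - 1 - (p.2 : ℕ)) * Δ + (ψ (eB p.1) (p.1 : Sym2 V)).val + 1
    with hbody
  set col : SubV G m → ℕ := Sum.elim (fun _ => 0) body with hcoldef
  -- helper : H * Δ arithmetic
  have hmulle : ∀ p q : ℕ, p ≤ q → p * Δ ≤ q * Δ := fun p q h => Nat.mul_le_mul_right _ h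
  have hHmul : ∀ lvlm1 : ℕ, lvlm1 + 1 ≤ H → lvlm1 * Δ + Δ ≤ H * Δ := by
    intro l hl
    have h1 : (l + 1) * Δ ≤ H * Δ := hmulle _ _ hl
    have h2 : (l + 1) * Δ = l * Δ + Δ := by ring
    omega
  -- color bound
  have hcol_lt : ∀ z : SubV G m, col z < K := by
    intro z
    rcases z with u | ⟨e, i⟩
    · simp only [hcoldef, Sum.elim_inl]
      omega
    · simp only [hcoldef, Sum.elim_inr, hbody]
      have hiLt : (i : ℕ) < m := by have := i.isLt; omega
      split_ifs with h1 h2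
    -- mid
      · have hodd : ¬ Even m := by rw [Nat.even_iff]; omega
        rw [if_neg hodd] at hK
        omega
      · have hlev : (i : ℕ) + 1 ≤ H := by omega
        have := hHmul (i : ℕ) hlev
        have hψlt : (ψ (eA e) (e : Sym2 V)).val < Δ := (ψ (eA e) (e : Sym2 V)).isLt
        omega
      · have hlev : (m - 1 - (i : ℕ)) + 1 ≤ H := by omega
        have := hHmul (m - 1 - (i : ℕ)) hlev
        have hψlt : (ψ (eB e) (e : Sym2 V)).val < Δ := (ψ (eB e) (e : Sym2 V)).isLt
        omega
  -- decoding of colors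
  have hdec : ∀ p q c1 c2 : ℕ, c1 < Δ → c2 < Δ → p * Δ + c1 = q * Δ + c2 →
      p = q ∧ c1 = c2 := by
    intro p q c1 c2 h1 h2 heq
    have heq2 : Δ * p + c1 = Δ * q + c2 := by
      rw [mul_comm Δ p, mul_comm Δ q]; exact heq
    have hmod : (Δ * p + c1) % Δ = (Δ * q + c2) % Δ := by rw [heq2]
    rw [Nat.mul_add_mod, Nat.mul_add_mod, Nat.mod_eq_of_lt h1, Nat.mod_eq_of_lt h2] at hmod
    subst hmod
    have : p * Δ = q * Δ := by omega
    exact ⟨Nat.eq_of_mul_eq_mul_right hΔpos this, rfl⟩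
  -- pot-based contradiction helpers
  have habsurd : ∀ (x y : V) (δ1 δ2 : ℕ), (x = y → m + 1 ≤ δ1 + δ2) →
      ¬ (δ1 + (m+1) * G.dist x y + δ2 ≤ m) := by
    intro x y δ1 δ2 hsum h
    by_cases hxy : x = y
    · have h2 := hsum hxy
      rw [hxy, SimpleGraph.dist_self, Nat.mul_zero] at h
      omega
    · have hd : G.dist x y ≠ 0 := fun h0 => hxy (hG.dist_eq_zero_iff.mp h0)
      have h2 : (m+1) * 1 ≤ (m+1) * G.dist x y := Nat.mul_le_mul_left _ (by omega)
      omega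
  have hpotsplit : ∀ (e f : G.edgeSet) (i j : Fin (m+1-1)), e ≠ f →
      pot m (Sum.inr (e, i)) (Sum.inr (f, j)) ≤ m →
      ((i:ℕ)+1) + (m+1) * G.dist (eA e) (eA f) + ((j:ℕ)+1) ≤ m ∨
      ((m-(i:ℕ))) + (m+1) * G.dist (eB e) (eA f) + ((j:ℕ)+1) ≤ m ∨
      ((i:ℕ)+1) + (m+1) * G.dist (eA e) (eB f) + (m-(j:ℕ)) ≤ m ∨
      ((m-(i:ℕ))) + (m+1) * G.dist (eB e) (eB f) + (m-(j:ℕ)) ≤ m := by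
    intro e f i j hef hpot
    have hval : pot m (Sum.inr (e, i)) (Sum.inr (f, j)) =
        if e = f then ((i:ℕ) - (j:ℕ)) + ((j:ℕ) - (i:ℕ))
        else min (gbase m e (i:ℕ) (eA f) + ((j:ℕ)+1))
                 (gbase m e (i:ℕ) (eB f) + (m - (j:ℕ))) := rfl
    rw [hval, if_neg hef, gbase, gbase, ← min_add_add_right, ← min_add_add_right] at hpot
    rcases min_le_iff.mp hpot with h | h <;> rcases min_le_iff.mp h with h' | h'
    · exact Or.inl h'
    · exact Or.inr (Or.inl h')
    · exact Or.inr (Or.inr (Or.inl h'))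
    · exact Or.inr (Or.inr (Or.inr h'))
  -- incidence membership helpers
  have hincA : ∀ e : G.edgeSet, (e : Sym2 V) ∈ G.incidenceSet (eA e) :=
    fun e => ⟨e.2, eA_mem e⟩
  have hincB : ∀ e : G.edgeSet, (e : Sym2 V) ∈ G.incidenceSet (eB e) :=
    fun e => ⟨e.2, eB_mem e⟩
  have hsep : ∀ e : G.edgeSet, ψ (eA e) (e : Sym2 V) ≠ ψ (eB e) (e : Sym2 V) := by
    intro e
    have := hψsep (eA e) (eB e) (adj_eA_eB e)
    rwa [mk_eA_eB e] at this
  -- properness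
  have hproper : ∀ z z' : SubV G m, ((G.subdivision (m+1)).power m).Adj z z' →
      col z ≠ col z' := by
    intro z z' hadj hcol
    have hpot := pot_le_of_power_adj hG hm hadj
    rcases z with u | ⟨e, i⟩ <;> rcases z' with w | ⟨f, j⟩
    · -- two branch vertices
      have hne : u ≠ w := fun h => hadj.1 (by rw [h])
      have hval : pot m (Sum.inl u) (Sum.inl (w : V)) = (m+1) * G.dist u w := rfl
      rw [hval] at hpot
      have hd : G.dist u w ≠ 0 := fun h0 => hne (hG.dist_eq_zero_iff.mp h0)
      have h2 : (m+1) * 1 ≤ (m+1) * G.dist u w := Nat.mul_le_mul_left _ (by omega)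
      omega
    · -- branch vs internal : colors differ trivially
      have hcol2 : (0:ℕ) =
          (if 2 * (j:ℕ) + 1 = m then H * Δ + 1
           else if (j:ℕ) + 1 < m - (j:ℕ) then (j:ℕ) * Δ + (ψ (eA f) (f : Sym2 V)).val + 1
           else (m - 1 - (j:ℕ)) * Δ + (ψ (eB f) (f : Sym2 V)).val + 1) := hcol
      split_ifs at hcol2 <;> omega
    · have hcol2 : (if 2 * (i:ℕ) + 1 = m then H * Δ + 1
           else if (i:ℕ) + 1 < m - (i:ℕ) then (i:ℕ) * Δ + (ψ (eA e) (e : Sym2 V)).val + 1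
           else (m - 1 - (i:ℕ)) * Δ + (ψ (eB e) (e : Sym2 V)).val + 1) = (0:ℕ) := hcol
      split_ifs at hcol2 <;> omega
    · -- two internal vertices
      have hiLt : (i : ℕ) < m := by have := i.isLt; omega
      have hjLt : (j : ℕ) < m := by have := j.isLt; omega
      have hψA : ∀ g : G.edgeSet, (ψ (eA g) (g : Sym2 V)).val < Δ := fun g => Fin.isLt _
      have hψB : ∀ g : G.edgeSet, (ψ (eB g) (g : Sym2 V)).val < Δ := fun g => Fin.isLt _
      have hcol2 : (if 2 * (i:ℕ) + 1 = m then H * Δ + 1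
           else if (i:ℕ) + 1 < m - (i:ℕ) then (i:ℕ) * Δ + (ψ (eA e) (e : Sym2 V)).val + 1
           else (m - 1 - (i:ℕ)) * Δ + (ψ (eB e) (e : Sym2 V)).val + 1) =
          (if 2 * (j:ℕ) + 1 = m then H * Δ + 1
           else if (j:ℕ) + 1 < m - (j:ℕ) then (j:ℕ) * Δ + (ψ (eA f) (f : Sym2 V)).val + 1
           else (m - 1 - (j:ℕ)) * Δ + (ψ (eB f) (f : Sym2 V)).val + 1) := hcol
      by_cases hm1 : 2 * (i:ℕ) + 1 = m <;> by_cases hm2 : 2 * (j:ℕ) + 1 = m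
      · -- both mid
        rw [if_pos hm1, if_pos hm2] at hcol2
        by_cases hef : e = f
        · subst hef
          exact hadj.1 (by rw [show i = j from Fin.ext (by omega : ((i:ℕ) = (j:ℕ)))])
        · rcases hpotsplit e f i j hef hpot with h | h | h | h
          · exact habsurd _ _ _ _ (fun _ => by omega) h
          · exact habsurd _ _ _ _ (fun _ => by omega) h
          · exact habsurd _ _ _ _ (fun _ => by omega) h
          · exact habsurd _ _ _ _ (fun _ => by omega) h
      · -- mid vs near
        rw [if_pos hm1, if_neg hm2] at hcol2
        by_cases hA2 : (j:ℕ) + 1 < m - (j:ℕ)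
        · rw [if_pos hA2] at hcol2
          have := hHmul (j : ℕ) (by omega)
          have := hψA f
          omega
        · rw [if_neg hA2] at hcol2
          have := hHmul (m - 1 - (j : ℕ)) (by omega)
          have := hψB f
          omega
      · -- near vs mid
        rw [if_neg hm1, if_pos hm2] at hcol2
        by_cases hA1 : (i:ℕ) + 1 < m - (i:ℕ)
        · rw [if_pos hA1] at hcol2
          have := hHmul (i : ℕ) (by omega)
          have := hψA e
          omega
        · rw [if_neg hA1] at hcol2
          have := hHmul (m - 1 - (i : ℕ)) (by omega)
          have := hψB e
          omega
      · -- near vs near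
        rw [if_neg hm1, if_neg hm2] at hcol2
        by_cases hA1 : (i:ℕ) + 1 < m - (i:ℕ) <;> by_cases hA2 : (j:ℕ) + 1 < m - (j:ℕ)
        · -- nearA vs nearA
          rw [if_pos hA1, if_pos hA2] at hcol2
          obtain ⟨hab, hcc⟩ := hdec (i:ℕ) (j:ℕ) _ _ (hψA e) (hψA f) (by omega)
          have hψeq : ψ (eA e) (e : Sym2 V) = ψ (eA f) (f : Sym2 V) := Fin.ext hcc
          by_cases hef : e = f
          · subst hef
            exact hadj.1 (by rw [show i = j from Fin.ext hab])
          · have hef' : (e : Sym2 V) ≠ (f : Sym2 V) := fun h => hef (Subtype.ext h)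
            by_cases hvv : eA e = eA f
            · rw [← hvv] at hψeq
              exact hef' (hψinj (eA e) _ _ (hincA e) (hvv ▸ hincA f) hψeq)
            · rcases hpotsplit e f i j hef hpot with h | h | h | h
              · exact habsurd _ _ _ _ (fun hxy => absurd hxy hvv) h
              · exact habsurd _ _ _ _ (fun _ => by omega) h
              · exact habsurd _ _ _ _ (fun _ => by omega) h
              · exact habsurd _ _ _ _ (fun _ => by omega) h
        · -- nearA vs nearB
          rw [if_pos hA1, if_neg hA2] at hcol2
          obtain ⟨hab, hcc⟩ := hdec (i:ℕ) (m-1-(j:ℕ)) _ _ (hψA e) (hψB f) (by omega)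
          have hψeq : ψ (eA e) (e : Sym2 V) = ψ (eB f) (f : Sym2 V) := Fin.ext hcc
          by_cases hef : e = f
          · subst hef
            exact hsep e hψeq
          · have hef' : (e : Sym2 V) ≠ (f : Sym2 V) := fun h => hef (Subtype.ext h)
            by_cases hvv : eA e = eB f
            · rw [hvv] at hψeq
              exact hef' (hψinj (eB f) _ _ (hvv ▸ hincA e) (hincB f) hψeq)
            · rcases hpotsplit e f i j hef hpot with h | h | h | h
              · exact habsurd _ _ _ _ (fun _ => by omega) h
              · exact habsurd _ _ _ _ (fun _ => by omega) h
              · exact habsurd _ _ _ _ (fun hxy => absurd hxy hvv) h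
              · exact habsurd _ _ _ _ (fun _ => by omega) h
        · -- nearB vs nearA
          rw [if_neg hA1, if_pos hA2] at hcol2
          obtain ⟨hab, hcc⟩ := hdec (m-1-(i:ℕ)) (j:ℕ) _ _ (hψB e) (hψA f) (by omega)
          have hψeq : ψ (eB e) (e : Sym2 V) = ψ (eA f) (f : Sym2 V) := Fin.ext hcc
          by_cases hef : e = f
          · subst hef
            exact hsep e hψeq.symm
          · have hef' : (e : Sym2 V) ≠ (f : Sym2 V) := fun h => hef (Subtype.ext h)
            by_cases hvv : eB e = eA f
            · rw [← hvv] at hψeq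
              exact hef' (hψinj (eB e) _ _ (hincB e) (hvv ▸ hincA f) hψeq)
            · rcases hpotsplit e f i j hef hpot with h | h | h | h
              · exact habsurd _ _ _ _ (fun _ => by omega) h
              · exact habsurd _ _ _ _ (fun hxy => absurd hxy hvv) h
              · exact habsurd _ _ _ _ (fun _ => by omega) h
              · exact habsurd _ _ _ _ (fun _ => by omega) h
        · -- nearB vs nearB
          rw [if_neg hA1, if_neg hA2] at hcol2
          obtain ⟨hab, hcc⟩ := hdec (m-1-(i:ℕ)) (m-1-(j:ℕ)) _ _ (hψB e) (hψB f) (by omega)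
          have hψeq : ψ (eB e) (e : Sym2 V) = ψ (eB f) (f : Sym2 V) := Fin.ext hcc
          by_cases hef : e = f
          · subst hef
            exact hadj.1 (by rw [show i = j from Fin.ext (by omega : ((i:ℕ) = (j:ℕ)))])
          · have hef' : (e : Sym2 V) ≠ (f : Sym2 V) := fun h => hef (Subtype.ext h)
            by_cases hvv : eB e = eB f
            · rw [← hvv] at hψeq
              exact hef' (hψinj (eB e) _ _ (hincB e) (hvv ▸ hincB f) hψeq)
            · rcases hpotsplit e f i j hef hpot with h | h | h | h
              · exact habsurd _ _ _ _ (fun _ => by omega) h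
              · exact habsurd _ _ _ _ (fun _ => by omega) h
              · exact habsurd _ _ _ _ (fun _ => by omega) h
              · exact habsurd _ _ _ _ (fun hxy => absurd hxy hvv) h
  -- assemble the coloring
  exact ⟨SimpleGraph.Coloring.mk (fun z => (⟨col z, hcol_lt z⟩ : Fin K))
    (fun {a b} hadj heq => hproper a b hadj (congrArg Fin.val heq))⟩

end ColoringPart

theorem chromatic_m_over_m_add_one {V : Type*} [Fintype V] (G : SimpleGraph V)
    [DecidableRel G.Adj] (hG : G.Connected) (hΔ : 3 ≤ G.maxDegree)
    (m : ℕ) (hm : 0 < m) :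
    ((G.subdivision (m + 1)).power m).chromaticNumber
        = (((G.subdivision (m + 1)).power m).cliqueNum : ℕ∞) ∧
    ((G.subdivision (m + 1)).power m).cliqueNum
        = if Even m then m / 2 * G.maxDegree + 1 else (m - 1) / 2 * G.maxDegree + 2 := by
  classical
  letI : DecidableEq V := Classical.decEq V
  obtain ⟨s, hs⟩ := exists_clique hG m hm hΔ
  have hcolorable := exists_coloring hG m hm hΔ
  set K := m / 2 * G.maxDegree + (if Even m then 1 else 2) with hK
  have h1 : K ≤ ((G.subdivision (m + 1)).power m).cliqueNum := by
    have hle := SimpleGraph.IsClique.card_le_cliqueNum (tc := hs.isClique)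
    rwa [hs.card_eq] at hle
  have h2 : ((G.subdivision (m + 1)).power m).cliqueNum ≤ K := by
    obtain ⟨t, ht⟩ := SimpleGraph.exists_isNClique_cliqueNum
      (G := (G.subdivision (m + 1)).power m)
    have hle := ht.isClique.card_le_of_colorable hcolorable
    rwa [ht.card_eq] at hle
  have hcn : ((G.subdivision (m + 1)).power m).cliqueNum = K := le_antisymm h2 h1
  have h3 : ((G.subdivision (m + 1)).power m).chromaticNumber ≤ (K : ℕ∞) :=
    hcolorable.chromaticNumber_le
  have h4 : (K : ℕ∞) ≤ ((G.subdivision (m + 1)).power m).chromaticNumber := by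
    have hle := hs.isClique.card_le_chromaticNumber
    rwa [hs.card_eq] at hle
  constructor
  · rw [hcn]
    exact le_antisymm h3 h4
  · rw [hcn, hK]
    by_cases hev : Even m
    · rw [if_pos hev, if_pos hev]
    · rw [if_neg hev, if_neg hev]
      have hodd : (m - 1) / 2 = m / 2 := by
        have := Nat.not_even_iff.mp hev
        omega
      rw [hodd]
end

section
/- Let G be a connected graph and n ≥ 2 an integer. Then the chromatic number of the n-subdivision G^{1/n} equals 3 if n is odd and χ(G) ≥ 3, and equals 2 otherwise (assuming G has at least one edge). -/
open SimpleGraph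

namespace ChromSubAux

variable {V : Type*} {G : SimpleGraph V} {n : ℕ}

lemma adj_inl_inl {u v : V} :
    (G.subdivision n).Adj (Sum.inl u) (Sum.inl v) ↔ (n = 1 ∧ G.Adj u v) := Iff.rfl

lemma adj_inl_inr {u : V} {e : G.edgeSet} {i : Fin (n - 1)} :
    (G.subdivision n).Adj (Sum.inl u) (Sum.inr (e, i)) ↔
      ((u = (Quot.out e.1).1 ∧ (i : ℕ) = 0) ∨
       (u = (Quot.out e.1).2 ∧ (i : ℕ) = n - 2)) := Iff.rfl

lemma adj_inr_inr {e f : G.edgeSet} {i j : Fin (n - 1)} :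
    (G.subdivision n).Adj (Sum.inr (e, i)) (Sum.inr (f, j)) ↔
      (e = f ∧ ((i : ℕ) + 1 = (j : ℕ) ∨ (j : ℕ) + 1 = (i : ℕ))) := Iff.rfl

lemma adj_out (e : G.edgeSet) : G.Adj (Quot.out e.1).1 (Quot.out e.1).2 := by
  rw [← SimpleGraph.mem_edgeSet]
  have : s((Quot.out e.1).1, (Quot.out e.1).2) = e.1 := Quot.out_eq e.1
  rw [this]
  exact e.2

lemma enat_le_of_lt_succ {a : ℕ∞} {m : ℕ} (h : a < ((m + 1 : ℕ) : ℕ∞)) : a ≤ (m : ℕ∞) := by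
  induction a using ENat.recTopCoe with
  | top => exact absurd h (by simp)
  | coe k => exact_mod_cast Nat.lt_succ_iff.mp (by exact_mod_cast h)

lemma fin2_triple : ∀ x y z : Fin 2, x ≠ y → (x = z ↔ y ≠ z) := by decide

lemma fin2_sub : ∀ x : Fin 2, x ≠ 1 - x := by decide

lemma fin2_sub' : ∀ x y : Fin 2, x ≠ y → x = 1 - y := by decide

/-- 2-colorability when `n` is even. -/
lemma col2_even (hn : 2 ≤ n) (hne : Even n) : (G.subdivision n).Colorable 2 := by
  refine ⟨SimpleGraph.Coloring.mk
    (fun x => match x with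
      | Sum.inl _ => 0
      | Sum.inr (_, i) => if (i : ℕ) % 2 = 0 then 1 else 0) ?_⟩
  rw [Nat.even_iff] at hne
  rintro (u | ⟨e, i⟩) (v | ⟨f, j⟩) h
  · exact absurd (adj_inl_inl.mp h).1 (by omega)
  · rcases adj_inl_inr.mp h with ⟨-, hi⟩ | ⟨-, hi⟩ <;>
      simp only [] <;> split_ifs <;> first | decide | omega
  · rcases adj_inl_inr.mp ((G.subdivision n).adj_symm h) with ⟨-, hi⟩ | ⟨-, hi⟩ <;>
      simp only [] <;> split_ifs <;> first | decide | omega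
  · obtain ⟨rfl, hij⟩ := adj_inr_inr.mp h
    simp only [] ; split_ifs <;> first | decide | omega

/-- 2-colorability when `n` is odd and `G` is 2-colorable. -/
lemma col2_odd (hn : 2 ≤ n) (hno : Odd n) (c : G.Coloring (Fin 2)) :
    (G.subdivision n).Colorable 2 := by
  refine ⟨SimpleGraph.Coloring.mk
    (fun x => match x with
      | Sum.inl v => c v
      | Sum.inr (e, i) =>
          if (i : ℕ) % 2 = 0 then 1 - c (Quot.out e.1).1 else c (Quot.out e.1).1) ?_⟩
  rw [Nat.odd_iff] at hno
  rintro (u | ⟨e, i⟩) (v | ⟨f, j⟩) h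
  · exact absurd (adj_inl_inl.mp h).1 (by omega)
  · have hj2 := j.isLt
    rcases adj_inl_inr.mp h with ⟨rfl, hj⟩ | ⟨rfl, hj⟩
    · simp only []
      rw [if_pos (by omega)]
      exact fun hc => fin2_sub _ hc
    · have : ¬ ((j : ℕ) % 2 = 0) := by omega
      simp only []
      rw [if_neg this]
      exact (c.valid (adj_out f)).symm
  · have hi2 := i.isLt
    rcases adj_inl_inr.mp ((G.subdivision n).adj_symm h) with ⟨rfl, hi⟩ | ⟨rfl, hi⟩
    · simp only []
      rw [if_pos (by omega)]
      exact fun hc => fin2_sub _ hc.symm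
    · have : ¬ ((i : ℕ) % 2 = 0) := by omega
      simp only []
      rw [if_neg this]
      exact c.valid (adj_out e)
  · obtain ⟨rfl, hij⟩ := adj_inr_inr.mp h
    simp only []
    split_ifs <;> first | omega | (exact fun hc => fin2_sub _ hc) |
      (exact fun hc => fin2_sub _ hc.symm)

/-- 3-colorability when `n` is odd (and `n ≥ 3`). -/
lemma col3 (hn : 2 ≤ n) (hno : Odd n) : (G.subdivision n).Colorable 3 := by
  refine ⟨SimpleGraph.Coloring.mk
    (fun x => match x with
      | Sum.inl _ => 0
      | Sum.inr (_, i) =>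
          if (i : ℕ) = n - 2 then 2 else if (i : ℕ) % 2 = 0 then 1 else 2) ?_⟩
  rw [Nat.odd_iff] at hno
  rintro (u | ⟨e, i⟩) (v | ⟨f, j⟩) h
  · exact absurd (adj_inl_inl.mp h).1 (by omega)
  · have hj2 := j.isLt
    rcases adj_inl_inr.mp h with ⟨-, hj⟩ | ⟨-, hj⟩ <;>
      simp only [] <;> split_ifs <;> first | decide | omega
  · have hi2 := i.isLt
    rcases adj_inl_inr.mp ((G.subdivision n).adj_symm h) with ⟨-, hi⟩ | ⟨-, hi⟩ <;>
      simp only [] <;> split_ifs <;> first | decide | omega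
  · obtain ⟨rfl, hij⟩ := adj_inr_inr.mp h
    have hi2 := i.isLt
    have hj2 := j.isLt
    simp only [] ; split_ifs <;> first | decide | omega

/-- Color alternation along a subdivided edge, for a 2-coloring. -/
lemma alt (hn : 2 ≤ n) (C : (G.subdivision n).Coloring (Fin 2)) (e : G.edgeSet) :
    ∀ i : ℕ, ∀ h : i < n - 1,
      (C (Sum.inr (e, ⟨i, h⟩)) = C (Sum.inl (Quot.out e.1).1) ↔ i % 2 = 1) := by
  intro i
  induction i with
  | zero =>
      intro h
      have hadj : (G.subdivision n).Adj (Sum.inl (Quot.out e.1).1)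
          (Sum.inr (e, ⟨0, h⟩)) := Or.inl ⟨rfl, rfl⟩
      have := C.valid hadj
      simp only [Nat.zero_mod]
      exact ⟨fun hc => absurd hc.symm this, by omega⟩
  | succ i ih =>
      intro h
      have h' : i < n - 1 := by omega
      have hadj : (G.subdivision n).Adj (Sum.inr (e, (⟨i, h'⟩ : Fin (n-1))))
          (Sum.inr (e, ⟨i + 1, h⟩)) := ⟨rfl, Or.inl rfl⟩
      have hne := C.valid hadj
      rw [fin2_triple _ _ _ hne.symm, ne_eq, ih h']
      omega
  
/-- If `n` is odd and the subdivision is 2-colorable, then `G` is 2-colorable. -/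
lemma not_col2 (hn : 2 ≤ n) (hno : Odd n) (hG : ¬ G.Colorable 2) :
    ¬ (G.subdivision n).Colorable 2 := by
  rintro ⟨C⟩
  apply hG
  refine ⟨SimpleGraph.Coloring.mk (fun v => C (Sum.inl v)) ?_⟩
  intro a b hab
  rw [Nat.odd_iff] at hno
  have he : s(a, b) ∈ G.edgeSet := hab
  set e : G.edgeSet := ⟨s(a, b), he⟩ with hedef
  have hlt : n - 2 < n - 1 := by omega
  have hkey : C (Sum.inr (e, ⟨n - 2, hlt⟩)) = C (Sum.inl (Quot.out e.1).1) := by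
    rw [alt hn C e (n - 2) hlt]
    omega
  have hadj : (G.subdivision n).Adj (Sum.inl (Quot.out e.1).2)
      (Sum.inr (e, ⟨n - 2, hlt⟩)) := Or.inr ⟨rfl, rfl⟩
  have hne : C (Sum.inl (Quot.out e.1).1) ≠ C (Sum.inl (Quot.out e.1).2) := by
    have := C.valid hadj
    rw [hkey] at this
    exact fun hc => this (hc.symm)
  have hout : s((Quot.out e.1).1, (Quot.out e.1).2) = s(a, b) := Quot.out_eq e.1
  rw [Sym2.eq_iff] at hout
  rcases hout with ⟨h1, h2⟩ | ⟨h1, h2⟩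
  · rw [h1, h2] at hne; exact hne
  · rw [h1, h2] at hne; exact fun hc => hne hc.symm

/-- The subdivision has an edge (so it is not 1-colorable). -/
lemma not_col1 (hn : 2 ≤ n) (he : G.edgeSet.Nonempty) :
    ¬ (G.subdivision n).Colorable 1 := by
  rintro ⟨C⟩
  obtain ⟨e, hee⟩ := he
  have hlt : 0 < n - 1 := by omega
  have hadj : (G.subdivision n).Adj (Sum.inl (Quot.out e).1)
      (Sum.inr (⟨e, hee⟩, ⟨0, hlt⟩)) := Or.inl ⟨rfl, rfl⟩
  exact C.valid hadj (Subsingleton.elim _ _)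

end ChromSubAux

theorem chromatic_subdivision {V : Type*} (G : SimpleGraph V)
    (hG : G.Connected) (n : ℕ) (hn : 2 ≤ n) (he : G.edgeSet.Nonempty) :
    (Odd n ∧ 3 ≤ G.chromaticNumber → (G.subdivision n).chromaticNumber = 3) ∧
    (¬ (Odd n ∧ 3 ≤ G.chromaticNumber) → (G.subdivision n).chromaticNumber = 2) := by
  classical
  have key2 : ∀ (H : SimpleGraph (V ⊕ (G.edgeSet × Fin (n-1)))),
      H.Colorable 2 → ¬ H.Colorable 1 → H.chromaticNumber = 2 := by
    intro H hc h1
    refine le_antisymm (by exact_mod_cast hc.chromaticNumber_le) ?_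
    by_contra hlt
    rw [not_le] at hlt
    have : H.chromaticNumber ≤ ((1 : ℕ) : ℕ∞) :=
      ChromSubAux.enat_le_of_lt_succ (m := 1) (by exact_mod_cast hlt)
    exact h1 (SimpleGraph.chromaticNumber_le_iff_colorable.mp this)
  constructor
  · rintro ⟨hodd, h3⟩
    have hnc2 : ¬ G.Colorable 2 := fun hc => by
      have := hc.chromaticNumber_le
      have : G.chromaticNumber ≤ (2:ℕ∞) := by exact_mod_cast this
      exact absurd (le_trans h3 this) (by norm_num)
    have hup : (G.subdivision n).chromaticNumber ≤ 3 := by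
      exact_mod_cast (ChromSubAux.col3 hn hodd).chromaticNumber_le
    refine le_antisymm hup ?_
    by_contra hlt
    rw [not_le] at hlt
    have h2 : (G.subdivision n).chromaticNumber ≤ ((2 : ℕ) : ℕ∞) :=
      ChromSubAux.enat_le_of_lt_succ (m := 2) (by exact_mod_cast hlt)
    exact ChromSubAux.not_col2 hn hodd hnc2
      (SimpleGraph.chromaticNumber_le_iff_colorable.mp h2)
  · intro hnot
    apply key2 _ _ (ChromSubAux.not_col1 hn he)
    rcases Nat.even_or_odd n with hev | hodd
    · exact ChromSubAux.col2_even hn hev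
    · have hle : G.chromaticNumber ≤ ((2 : ℕ) : ℕ∞) := by
        have h3 : ¬ (3 : ℕ∞) ≤ G.chromaticNumber := fun h => hnot ⟨hodd, h⟩
        rw [not_le] at h3
        exact ChromSubAux.enat_le_of_lt_succ (m := 2) (by exact_mod_cast h3)
      obtain ⟨c⟩ := SimpleGraph.chromaticNumber_le_iff_colorable.mp hle
      exact ChromSubAux.col2_odd hn hodd c
end
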